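/- arXiv:1208.1182 — 7 statements merged into one kernel-verified Lean document; each statement's English description precedes it below -/
import Mathlib

section
/- For every topological space X, c(X) ≤ μ(X); equivalently, if X is κ-favorable for an infinite cardinal κ, then every family of pairwise disjoint nonempty open subsets of X has cardinality at most κ. -/
open Cardinal Set Topology TopologicalSpace

universe u

/-- A strategy for Player I in the open-open game of length `κ` on `X`: to each
position `i < κ` and each partial play (a transfinite sequence of length `< κ`,
namely the sets chosen by Player II at earlier positions) it assigns a set. -/
def GameStrategy (X : Type u) (κ : Cardinal.{u}) : Type u :=
  (i : κ.ord.ToType) → ({j : κ.ord.ToType // j < i} → Set X) → Set X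

/-- `s` is a winning strategy for Player I in the open-open game of length `κ` on `X`:
it assigns to every transfinite sequence of length `< κ` of nonempty open subsets of `X`
a nonempty open subset of `X`, and for every transfinite sequence `(B_α)_{α<κ}` of
nonempty open sets with `B_α ⊆ s((B_γ)_{γ<α})` for all `α < κ`, the union
`⋃_{α<κ} B_α` is dense in `X`. -/
def IsWinningStrategy (X : Type u) [TopologicalSpace X] (κ : Cardinal.{u})
    (s : GameStrategy X κ) : Prop :=
  (∀ (i : κ.ord.ToType) (f : {j : κ.ord.ToType // j < i} → Set X),
      (∀ j, IsOpen (f j) ∧ (f j).Nonempty) → IsOpen (s i f) ∧ (s i f).Nonempty) ∧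
  (∀ B : κ.ord.ToType → Set X,
      (∀ i, (IsOpen (B i) ∧ (B i).Nonempty) ∧ B i ⊆ s i (fun j => B j.1)) →
      Dense (⋃ i, B i))

/-- `X` is `κ`-favorable: Player I has a winning strategy in the open-open game of
length `κ` on `X`. -/
def IsFavorable (X : Type u) [TopologicalSpace X] (κ : Cardinal.{u}) : Prop :=
  ∃ s : GameStrategy X κ, IsWinningStrategy X κ s

/-- `μ(X)`: the least infinite cardinal `κ` such that `X` is `κ`-favorable. -/
noncomputable def mu (X : Type u) [TopologicalSpace X] : Cardinal.{u} :=
  sInf {κ : Cardinal.{u} | ℵ₀ ≤ κ ∧ IsFavorable X κ}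

/-- The cellularity `c(X)`: the supremum of the cardinalities of families of pairwise
disjoint nonempty open subsets of `X`. -/
noncomputable def cellularity (X : Type u) [TopologicalSpace X] : Cardinal.{u} :=
  ⨆ U : {U : Set (Set X) // (∀ V ∈ U, IsOpen V ∧ V.Nonempty) ∧ U.PairwiseDisjoint id},
    #U.1

/-- A `π`-base for `X`: a family of nonempty open sets such that every nonempty open
set contains a member of the family. -/
def IsPiBase (X : Type u) [TopologicalSpace X] (B : Set (Set X)) : Prop :=
  (∀ V ∈ B, IsOpen V ∧ V.Nonempty) ∧
  (∀ U : Set X, IsOpen U → U.Nonempty → ∃ V ∈ B, V ⊆ U)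

/-- `π(X)`: the least cardinality of a `π`-base for `X`. -/
noncomputable def piWeight (X : Type u) [TopologicalSpace X] : Cardinal.{u} :=
  sInf {c : Cardinal.{u} | ∃ B : Set (Set X), IsPiBase X B ∧ #B = c}

/-- `Sat(X)`: the least cardinal `κ` such that every family of pairwise disjoint
nonempty open subsets of `X` has cardinality `< κ`. -/
noncomputable def satNumber (X : Type u) [TopologicalSpace X] : Cardinal.{u} :=
  sInf {κ : Cardinal.{u} | ∀ U : Set (Set X),
    (∀ V ∈ U, IsOpen V ∧ V.Nonempty) → U.PairwiseDisjoint id → #U < κ}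

/-- A skeletal map: a continuous surjection such that the closure of the image of every
nonempty open set has nonempty interior. -/
def Skeletal {X : Type u} {Y : Type u} [TopologicalSpace X] [TopologicalSpace Y]
    (f : X → Y) : Prop :=
  Continuous f ∧ Function.Surjective f ∧
    ∀ U : Set X, IsOpen U → U.Nonempty → (interior (closure (f '' U))).Nonempty

/-- An inverse system of topological spaces over a preordered indexing set: spaces
`obj σ` and continuous surjective bonding maps `map : obj σ → obj ρ` for `ρ ≤ σ`,
compatible with identities and composition. -/
structure InvSys (I : Type u) [Preorder I] : Type (u + 1) where
  obj : I → Type u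
  topo : ∀ σ, TopologicalSpace (obj σ)
  map : ∀ {ρ σ : I}, ρ ≤ σ → obj σ → obj ρ
  map_id : ∀ (σ : I) (x : obj σ), map (le_refl σ) x = x
  map_comp : ∀ {ρ σ τ : I} (h₁ : ρ ≤ σ) (h₂ : σ ≤ τ) (x : obj τ),
    map h₁ (map h₂ x) = map (h₁.trans h₂) x
  map_cont : ∀ {ρ σ : I} (h : ρ ≤ σ), Continuous[topo σ, topo ρ] (map h)
  map_surj : ∀ {ρ σ : I} (h : ρ ≤ σ), Function.Surjective (map h)

/-- The inverse limit of an inverse system: the subspace of the product consisting of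
all threads. -/
def InvSys.Limit {I : Type u} [Preorder I] (D : InvSys I) : Type u :=
  {x : ∀ σ, D.obj σ // ∀ (ρ σ : I) (h : ρ ≤ σ), D.map h (x σ) = x ρ}

/-- The limit carries the subspace topology of the product topology. -/
instance InvSys.instTopLimit {I : Type u} [Preorder I] (D : InvSys I) :
    TopologicalSpace D.Limit :=
  TopologicalSpace.induced Subtype.val (@Pi.topologicalSpace _ _ D.topo)

/-- The inverse limit of the subsystem of an inverse system determined by a subset `A`
of the indexing set. -/
def InvSys.chainLimit {I : Type u} [Preorder I] (D : InvSys I) (A : Set I) : Type u :=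
  {x : ∀ a : A, D.obj a // ∀ (a b : A) (h : (a : I) ≤ b), D.map h (x b) = x a}

instance InvSys.instTopChainLimit {I : Type u} [Preorder I] (D : InvSys I) (A : Set I) :
    TopologicalSpace (D.chainLimit A) :=
  TopologicalSpace.induced Subtype.val (@Pi.topologicalSpace _ _ fun a : A => D.topo a)

/-- The canonical map from `obj σ`, for `σ` an upper bound of `A`, to the limit of the
subsystem over `A`. -/
def InvSys.toChainLimit {I : Type u} [Preorder I] (D : InvSys I) (A : Set I) (σ : I)
    (h : ∀ a ∈ A, a ≤ σ) : D.obj σ → D.chainLimit A :=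
  fun x => ⟨fun a => D.map (h a a.2) x, fun _ b hab => D.map_comp hab (h b b.2) x⟩

/-- `κ`-completeness of an inverse system: every chain of cardinality at most `κ` in the
indexing set has a least upper bound, and for every such chain with least upper bound
`σ`, the canonical map from `obj σ` to the limit of the subsystem over the chain is a
homeomorphism. -/
def InvSys.IsComplete {I : Type u} [Preorder I] (D : InvSys I) (κ : Cardinal.{u}) : Prop :=
  (∀ A : Set I, IsChain (· ≤ ·) A → #A ≤ κ → ∃ σ : I, IsLUB A σ) ∧
  (∀ A : Set I, IsChain (· ≤ ·) A → #A ≤ κ → ∀ σ : I, ∀ hσ : IsLUB A σ,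
    @IsHomeomorph _ _ (D.topo σ) (D.instTopChainLimit A)
      (D.toChainLimit A σ fun _ ha => hσ.1 ha))

/-- The weight of a topological space (with explicitly given topology): the least
cardinality of a base of the topology. -/
noncomputable def tweight (X : Type u) (t : TopologicalSpace X) : Cardinal.{u} :=
  sInf {c : Cardinal.{u} | ∃ B : Set (Set X),
    @TopologicalSpace.IsTopologicalBasis X t B ∧ #B = c}

/-- The class `C_κ`: spaces homeomorphic to the inverse limit of a `κ`-complete inverse
system over a directed poset, with all spaces `T₀` of weight at most `κ` and all bonding
maps skeletal. -/
def MemClassC (X : Type u) [TopologicalSpace X] (κ : Cardinal.{u}) : Prop :=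
  ∃ (I : Type u) (_ : PartialOrder I), IsDirected I (· ≤ ·) ∧
    ∃ D : InvSys I, D.IsComplete κ ∧
      (∀ σ : I, @T0Space (D.obj σ) (D.topo σ)) ∧
      (∀ σ : I, tweight (D.obj σ) (D.topo σ) ≤ κ) ∧
      (∀ (ρ σ : I) (h : ρ ≤ σ), @Skeletal _ _ (D.topo σ) (D.topo ρ) (D.map h)) ∧
      Nonempty (X ≃ₜ D.Limit)

/-- If `X` is `κ`-favorable, then every family of pairwise disjoint nonempty open
subsets of `X` has cardinality at most `κ`. -/
theorem favorable_card_le (X : Type u) [TopologicalSpace X]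
    (κ : Cardinal.{u}) (hfav : IsFavorable X κ)
    (U : Set (Set X)) (hU : ∀ V ∈ U, IsOpen V ∧ V.Nonempty)
    (hdisj : U.PairwiseDisjoint id) : #U ≤ κ := by
  classical
  obtain ⟨s, hs1, hs2⟩ := hfav
  set T := κ.ord.ToType with hT
  -- Player II's modifier: shrink the given set into a single member of `U` if possible.
  let g : Set X → Set X := fun W =>
    if h : ∃ V ∈ U, (W ∩ V).Nonempty then W ∩ h.choose else W
  have hg : ∀ W : Set X, IsOpen W → W.Nonempty →
      (IsOpen (g W) ∧ (g W).Nonempty) ∧ g W ⊆ W ∧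
      ∀ V ∈ U, (g W ∩ V).Nonempty → g W ⊆ V := by
    intro W hWo hWne
    by_cases h : ∃ V ∈ U, (W ∩ V).Nonempty
    · obtain ⟨hVU, hne⟩ := h.choose_spec
      have hgW : g W = W ∩ h.choose := dif_pos h
      rw [hgW]
      refine ⟨⟨hWo.inter (hU _ hVU).1, hne⟩, Set.inter_subset_left, ?_⟩
      rintro V hV ⟨x, hx1, hx2⟩
      by_cases hVeq : V = h.choose
      · rw [hVeq]; exact Set.inter_subset_right
      · exfalso
        have hd := hdisj hV hVU hVeq
        exact Set.disjoint_left.1 hd hx2 hx1.2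
    · have hgW : g W = W := dif_neg h
      rw [hgW]
      refine ⟨⟨hWo, hWne⟩, le_refl W, ?_⟩
      intro V hV hne
      exact absurd ⟨V, hV, hne⟩ h
  -- Player II's play against the strategy `s`.
  let B : T → Set X := IsWellFounded.fix (α := T) (· < ·)
    (fun i IH => g (s i (fun j => IH j.1 j.2)))
  have hBeq : ∀ i, B i = g (s i fun j => B j.1) :=
    fun i => IsWellFounded.fix_eq (α := T) (· < ·) _ i
  have hB : ∀ i, (IsOpen (B i) ∧ (B i).Nonempty) ∧ B i ⊆ s i (fun j => B j.1) := by
    intro i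
    refine IsWellFounded.induction (α := T) (· < ·)
      (motive := fun i => (IsOpen (B i) ∧ (B i).Nonempty) ∧ B i ⊆ s i fun j => B j.1) i ?_
    intro i IH
    have hW := hs1 i (fun j => B j.1) (fun j => (IH j.1 j.2).1)
    have := hg _ hW.1 hW.2
    rw [hBeq i]
    exact ⟨this.1, this.2.1⟩
  have hden := hs2 B hB
  have key : ∀ V ∈ U, ∃ i : T, B i ⊆ V ∧ (B i).Nonempty := by
    intro V hV
    obtain ⟨x, hx1, hx2⟩ := hden.inter_open_nonempty V (hU V hV).1 (hU V hV).2
    obtain ⟨i, hi⟩ := Set.mem_iUnion.1 hx2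
    refine ⟨i, ?_, (hB i).1.2⟩
    have hW := hs1 i (fun j => B j.1) (fun j => (hB j.1).1)
    have h3 := (hg _ hW.1 hW.2).2.2 V hV
    rw [← hBeq i] at h3
    exact h3 ⟨x, hi, hx1⟩
  choose F hF1 hF2 using key
  have hinj : Function.Injective (fun V : U => F V.1 V.2) := by
    rintro ⟨V, hV⟩ ⟨V', hV'⟩ h
    simp only at h
    apply Subtype.ext
    by_contra hVV'
    have hd := hdisj hV hV' hVV'
    obtain ⟨y, hy⟩ := hF2 V hV
    have hy1 : y ∈ V := hF1 V hV hy
    have hy2 : y ∈ V' := hF1 V' hV' (h ▸ hy)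
    exact Set.disjoint_left.1 hd hy1 hy2
  calc #U ≤ #T := Cardinal.mk_le_of_injective hinj
    _ = κ := Cardinal.mk_ord_toType κ

/-- `c(X) ≤ μ(X)`; equivalently, if `X` is `κ`-favorable for an infinite
cardinal `κ`, then every family of pairwise disjoint nonempty open subsets of `X` has
cardinality at most `κ`. -/
theorem cellularity_le_mu (X : Type u) [TopologicalSpace X] :
    cellularity X ≤ mu X ∧
    ∀ κ : Cardinal.{u}, ℵ₀ ≤ κ → IsFavorable X κ →
      ∀ U : Set (Set X), (∀ V ∈ U, IsOpen V ∧ V.Nonempty) →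
        U.PairwiseDisjoint id → #U ≤ κ := by
  classical
  refine ⟨?_, fun κ _ hfav U hU hd => favorable_card_le X κ hfav U hU hd⟩
  by_cases hX : Nonempty X
  · -- `X` is favorable for some infinite cardinal, so `mu X` is attained.
    set O := {V : Set X | IsOpen V ∧ V.Nonempty} with hO
    have hOne : O.Nonempty := ⟨Set.univ, isOpen_univ, Set.univ_nonempty⟩
    set κ₀ := max ℵ₀ #O with hκ₀def
    have hκ₀ : ℵ₀ ≤ κ₀ := le_max_left _ _
    have hcard : #O ≤ #(κ₀.ord.ToType) := by
      rw [Cardinal.mk_ord_toType]; exact le_max_right _ _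
    obtain ⟨f⟩ := Cardinal.le_def _ _ |>.1 hcard
    have hOn : Nonempty O := hOne.to_subtype
    let e : κ₀.ord.ToType → O := Function.invFun f
    have hesurj : Function.Surjective e := Function.invFun_surjective f.injective
    have hfav : IsFavorable X κ₀ := by
      refine ⟨fun i _ => (e i).1, fun i f hf => (e i).2, ?_⟩
      intro B hB
      rw [dense_iff_inter_open]
      intro W hWo hWne
      obtain ⟨i, hi⟩ := hesurj ⟨W, hWo, hWne⟩
      obtain ⟨x, hx⟩ := (hB i).1.2
      have hxW : x ∈ W := by
        have hsub : B i ⊆ (e i : Set X) := (hB i).2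
        have hxei := hsub hx
        rw [hi] at hxei
        exact hxei
      exact ⟨x, hxW, Set.mem_iUnion.2 ⟨i, hx⟩⟩
    have hSne : {κ : Cardinal.{u} | ℵ₀ ≤ κ ∧ IsFavorable X κ}.Nonempty :=
      ⟨κ₀, hκ₀, hfav⟩
    have hmem : mu X ∈ {κ : Cardinal.{u} | ℵ₀ ≤ κ ∧ IsFavorable X κ} :=
      csInf_mem hSne
    refine ciSup_le' fun U => ?_
    exact favorable_card_le X (mu X) hmem.2 U.1 U.2.1 U.2.2
  · refine ciSup_le' fun U => ?_
    have hUe : U.1 = ∅ := by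
      rcases Set.eq_empty_or_nonempty U.1 with h | ⟨V, hV⟩
      · exact h
      · obtain ⟨x, _⟩ := (U.2.1 V hV).2
        exact absurd ⟨x⟩ hX
    rw [hUe]
    simp
end

section
/- For every infinite cardinal κ, the Cantor cube {0,1}^κ (the product of κ copies of the two-point discrete space) is ω-favorable; hence μ({0,1}^κ) = ω. -/
open Cardinal Set Topology TopologicalSpace

universe u

open scoped Classical

namespace CantorAux

variable {ι : Type u}

/-- The basic clopen cylinder determined by a finite support and a function. -/
def Cyl (p : Finset ι × (ι → Bool)) : Set (ι → Bool) := {x | ∀ i ∈ p.1, x i = p.2 i}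

lemma isOpen_Cyl (p : Finset ι × (ι → Bool)) : IsOpen (Cyl p) := by
  have h : Cyl p = Set.pi ↑p.1 (fun i => ({p.2 i} : Set Bool)) := by
    ext x; simp [Cyl, Set.mem_pi]
  rw [h]
  exact isOpen_set_pi p.1.finite_toSet (fun i _ => isOpen_discrete _)

lemma nonempty_Cyl (p : Finset ι × (ι → Bool)) : (Cyl p).Nonempty :=
  ⟨p.2, fun _ _ => rfl⟩

lemma exists_cyl_subset {U : Set (ι → Bool)} (hU : IsOpen U) (hne : U.Nonempty) :
    ∃ p : Finset ι × (ι → Bool), Cyl p ⊆ U := by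
  obtain ⟨x, hx⟩ := hne
  rw [isOpen_pi_iff] at hU
  obtain ⟨I, u, h1, h2⟩ := hU x hx
  refine ⟨(I, x), fun y hy => h2 fun i hi => ?_⟩
  have : y i = x i := hy i hi
  rw [this]; exact (h1 i hi).2

/-- Choice of a cylinder inside a set. -/
noncomputable def cylSub (U : Set (ι → Bool)) : Finset ι × (ι → Bool) :=
  if h : IsOpen U ∧ U.Nonempty then (exists_cyl_subset h.1 h.2).choose
  else (∅, fun _ => false)

lemma cylSub_subset {U : Set (ι → Bool)} (h1 : IsOpen U) (h2 : U.Nonempty) :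
    Cyl (cylSub U) ⊆ U := by
  rw [cylSub, dif_pos ⟨h1, h2⟩]
  exact (exists_cyl_subset h1 h2).choose_spec

lemma exists_enum (S : Finset ι) :
    ∃ f : ℕ → Finset ι × (ι → Bool), ∀ p : Finset ι × (ι → Bool),
      p.1 ⊆ S → (∀ i ∉ p.1, p.2 i = false) → ∃ b, f b = p := by
  set A : Set (Finset ι × (ι → Bool)) :=
    {p | p.1 ⊆ S ∧ ∀ i ∉ p.1, p.2 i = false} with hA
  have hinj : Set.InjOn (fun p : Finset ι × (ι → Bool) =>
      (p.1, fun i : S => p.2 i)) A := by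
    rintro p hp q hq h
    simp only [Prod.mk.injEq] at h
    obtain ⟨h1, h2'⟩ := h
    have h2 : ∀ i : S, p.2 i = q.2 i := fun i => congrFun h2' i
    refine Prod.ext h1 (funext fun i => ?_)
    by_cases hi : i ∈ p.1
    · exact h2 ⟨i, hp.1 hi⟩
    · rw [hp.2 i hi, hq.2 i (h1 ▸ hi)]
  have hfin : A.Finite := by
    apply Set.Finite.of_finite_image ?_ hinj
    have hps : ({t : Finset ι | t ⊆ S}).Finite :=
      Set.Finite.ofFinset S.powerset (fun t => by simp [Finset.mem_powerset])
    apply Set.Finite.subset (hps.prod (Set.finite_univ (α := (S → Bool))))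
    rintro ⟨t, g⟩ ⟨p, hp, hpe⟩
    simp only [Prod.mk.injEq] at hpe
    exact ⟨hpe.1 ▸ hp.1, trivial⟩
  have hne : A.Nonempty := ⟨(∅, fun _ => false), by simp [hA]⟩
  obtain ⟨f, hf⟩ := hfin.countable.exists_eq_range hne
  refine ⟨f, fun p h1 h2 => ?_⟩
  have : p ∈ A := ⟨h1, h2⟩
  rw [hf] at this
  obtain ⟨b, hb⟩ := this
  exact ⟨b, hb⟩

/-- Canonical enumeration of cylinders with support in `S`. -/
noncomputable def enum (S : Finset ι) : ℕ → Finset ι × (ι → Bool) :=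
  (exists_enum S).choose

lemma enum_spec (S : Finset ι) (p : Finset ι × (ι → Bool))
    (h1 : p.1 ⊆ S) (h2 : ∀ i ∉ p.1, p.2 i = false) : ∃ b, enum S b = p :=
  (exists_enum S).choose_spec p h1 h2

/-- The strategy on ℕ-indexed histories: at stage `n = pair a b`, play the `b`-th
cylinder supported in the union of the supports of cylinders chosen inside the
first `a` moves of Player II. -/
noncomputable def stratN (n : ℕ) (f : (m : ℕ) → m < n → Set (ι → Bool)) :
    Finset ι × (ι → Bool) :=
  enum ((Finset.range (Nat.unpair n).1).attach.biUnion
    (fun m => (cylSub (f m.1 (lt_of_lt_of_le (Finset.mem_range.mp m.2)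
      (Nat.unpair_left_le n)))).1)) (Nat.unpair n).2

lemma stratN_congr {n₁ n₂ : ℕ} (h : n₁ = n₂)
    (f₁ : (m : ℕ) → m < n₁ → Set (ι → Bool)) (f₂ : (m : ℕ) → m < n₂ → Set (ι → Bool))
    (hf : ∀ m h1 h2, f₁ m h1 = f₂ m h2) : stratN n₁ f₁ = stratN n₂ f₂ := by
  subst h
  have : f₁ = f₂ := funext fun m => funext fun hm => hf m hm hm
  rw [this]

theorem natWin (B : ℕ → Set (ι → Bool)) (hB : ∀ n, IsOpen (B n) ∧ (B n).Nonempty)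
    (hsub : ∀ n, B n ⊆ Cyl (stratN n (fun m _ => B m))) : Dense (⋃ n, B n) := by
  have key : ∀ p : Finset ι × (ι → Bool), ∃ n, (Cyl p ∩ B n).Nonempty := by
    intro p
    set supp : ℕ → Finset ι := fun n => (cylSub (B n)).1 with hsupp
    set SA : ℕ → Finset ι := fun a => (Finset.range a).biUnion supp with hSA
    -- the part of p.1 eventually covered
    set t1 : Finset ι := p.1.filter (fun i => ∃ n, i ∈ supp n) with ht1
    set g : ι → ℕ := fun i => if h : ∃ n, i ∈ supp n then h.choose else 0 with hg
    set a : ℕ := t1.sup g + 1 with ha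
    have ht1a : t1 ⊆ SA a := by
      intro i hi
      have hex : ∃ n, i ∈ supp n := (Finset.mem_filter.mp hi).2
      have h1 : i ∈ supp (g i) := by rw [hg]; simp only [dif_pos hex]; exact hex.choose_spec
      have h2 : g i < a := Nat.lt_succ_of_le (Finset.le_sup hi)
      exact Finset.mem_biUnion.mpr ⟨g i, Finset.mem_range.mpr h2, h1⟩
    set q : Finset ι × (ι → Bool) := (t1, fun i => if i ∈ t1 then p.2 i else false) with hq
    obtain ⟨b, hb⟩ := enum_spec (SA a) q ht1a (fun i hi => by simp [hq, hi]; exact fun h => absurd h hi)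
    set n : ℕ := Nat.pair a b with hn
    -- compute the strategy at stage n
    have hus : (Nat.unpair n).1 = a := by rw [hn, Nat.unpair_pair]
    have hub : (Nat.unpair n).2 = b := by rw [hn, Nat.unpair_pair]
    have hmem : ∀ i, (i ∈ (Finset.range (Nat.unpair n).1).attach.biUnion
        (fun m => (cylSub (B m.1)).1)) ↔
        ∃ m ∈ Finset.range (Nat.unpair n).1, i ∈ supp m := by
      intro i
      constructor
      · intro h
        obtain ⟨m, -, hm⟩ := Finset.mem_biUnion.mp h
        exact ⟨m.1, m.2, hm⟩
      · rintro ⟨m, hm1, hm2⟩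
        exact Finset.mem_biUnion.mpr ⟨⟨m, hm1⟩, Finset.mem_attach _ _, hm2⟩
    have hS : ((Finset.range (Nat.unpair n).1).attach.biUnion
        (fun m => (cylSub (B m.1)).1)) = SA a := by
      ext i
      rw [hmem i, hus, hSA]
      exact Iff.symm Finset.mem_biUnion
    have hstrat : stratN n (fun m _ => B m) = q := by
      show enum ((Finset.range (Nat.unpair n).1).attach.biUnion
        (fun m => (cylSub (B m.1)).1)) (Nat.unpair n).2 = q
      rw [hS, hub]
      exact hb
    have hBq : B n ⊆ Cyl q := hstrat ▸ hsub n
    -- the cylinder chosen inside B n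
    set r : Finset ι × (ι → Bool) := cylSub (B n) with hr
    have hrB : Cyl r ⊆ B n := cylSub_subset (hB n).1 (hB n).2
    -- r.2 agrees with q on t1 ∩ r.1, since r.2 ∈ Cyl r ⊆ B n ⊆ Cyl q
    have hr2 : r.2 ∈ Cyl q := hBq (hrB (fun _ _ => rfl))
    -- build the witness point
    set x : ι → Bool := fun i => if i ∈ r.1 then r.2 i else p.2 i with hx
    have hxr : x ∈ Cyl r := fun i hi => by
      simp only [hx]; rw [if_pos hi]
    refine ⟨n, x, ?_, hrB hxr⟩
    intro i hi
    by_cases hir : i ∈ r.1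
    · have hit1 : i ∈ t1 := by
        rw [ht1, Finset.mem_filter]
        exact ⟨hi, n, hir⟩
      have h1 : r.2 i = q.2 i := hr2 i hit1
      have h2 : q.2 i = p.2 i := if_pos hit1
      show x i = p.2 i
      simp only [hx]
      rw [if_pos hir, h1, h2]
    · show x i = p.2 i
      simp only [hx]
      rw [if_neg hir]
  rw [dense_iff_inter_open]
  intro U hU hUne
  obtain ⟨p, hp⟩ := exists_cyl_subset hU hUne
  obtain ⟨n, x, hx1, hx2⟩ := key p
  exact ⟨x, hp hx1, Set.mem_iUnion.mpr ⟨n, hx2⟩⟩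


/-- `ℕ` is order isomorphic to `ℵ₀.ord.ToType`. -/
noncomputable def omegaIso : ℕ ≃o (Cardinal.aleph0.{u}.ord.ToType) := by
  refine OrderIso.trans (StrictMono.orderIsoOfSurjective
    (fun k => (⟨(k : Ordinal.{u}), ?_⟩ : Set.Iio (Cardinal.aleph0.{u}.ord)))
    (fun a b h => ?_) (fun x => ?_)) (Ordinal.ToType.mk)
  · rw [Cardinal.ord_aleph0]; exact Ordinal.nat_lt_omega0 _
  · exact Subtype.mk_lt_mk.mpr (Nat.cast_lt.mpr h)
  · have hx : (x : Ordinal.{u}) < Ordinal.omega0 :=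
      lt_of_lt_of_le x.2 Cardinal.ord_aleph0.le
    obtain ⟨k, hk⟩ := Ordinal.lt_omega0.mp hx
    exact ⟨k, Subtype.ext hk.symm⟩

end CantorAux


open CantorAux

/-- For every infinite cardinal `κ`, the Cantor cube `{0,1}^κ` is
`ω`-favorable; hence `μ({0,1}^κ) = ω`. -/
theorem cantorCube_omega_favorable (κ : Cardinal.{u}) (hκ : ℵ₀ ≤ κ) :
    IsFavorable (κ.ord.ToType → Bool) ℵ₀ ∧ mu (κ.ord.ToType → Bool) = ℵ₀ := by
  set ι := κ.ord.ToType with hι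
  set X := ι → Bool with hX
  set e : (Cardinal.aleph0.{u}.ord.ToType) ≃o ℕ := omegaIso.symm with he
  set s : GameStrategy X ℵ₀ := fun i f => Cyl (stratN (e i) (fun m hm =>
    f ⟨e.symm m, (e.symm_apply_apply i) ▸ (e.symm.strictMono hm)⟩)) with hs
  have hwin : IsWinningStrategy X ℵ₀ s := by
    constructor
    · intro i f _
      exact ⟨isOpen_Cyl _, nonempty_Cyl _⟩
    · intro B hB
      set B' : ℕ → Set X := fun n => B (e.symm n) with hB'def
      have hB' : ∀ n, IsOpen (B' n) ∧ (B' n).Nonempty := fun n => (hB _).1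
      have hsub' : ∀ n, B' n ⊆ Cyl (stratN n (fun m _ => B' m)) := by
        intro n
        have heq : stratN (e (e.symm n)) (fun m hm => B (e.symm m)) =
            stratN n (fun m _ => B' m) :=
          stratN_congr (e.apply_symm_apply n) _ _ (fun m h1 h2 => rfl)
        calc B' n ⊆ s (e.symm n) (fun j => B j.1) := (hB (e.symm n)).2
          _ = Cyl (stratN n (fun m _ => B' m)) := by
              show Cyl (stratN (e (e.symm n)) (fun m hm => B (e.symm m))) = _
              rw [heq]
      have hd := natWin B' hB' hsub'
      have hU : (⋃ n, B' n) = ⋃ i, B i :=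
        Function.Surjective.iUnion_comp (e.symm.surjective) B
      rwa [hU] at hd
  have hfav : IsFavorable X ℵ₀ := ⟨s, hwin⟩
  refine ⟨hfav, le_antisymm (csInf_le' ⟨le_rfl, hfav⟩)
    (le_csInf ⟨ℵ₀, le_rfl, hfav⟩ fun b hb => hb.1)⟩
end

section
/- If f : X → Y is a skeletal map of topological spaces and X is κ-favorable for an infinite cardinal κ, then Y is κ-favorable. -/
open Cardinal Set Topology TopologicalSpace

universe u

section AuxSkeletal

variable {X Y : Type u} [TopologicalSpace X] {κ : Cardinal.{u}}

open Classical

/-- Auxiliary construction: translate a play in `Y` to a play in `X`, with a `univ`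
fallback to keep all sets open and nonempty. -/
noncomputable def auxA (s : GameStrategy X κ) (f : X → Y) (B : κ.ord.ToType → Set Y) :
    κ.ord.ToType → Set X :=
  fun j =>
    let c := f ⁻¹' (B j) ∩ s j (fun k => auxA s f B k.1)
    if IsOpen c ∧ c.Nonempty then c else Set.univ
termination_by j => j
decreasing_by exact k.2

theorem auxA_def (s : GameStrategy X κ) (f : X → Y) (B : κ.ord.ToType → Set Y)
    (j : κ.ord.ToType) :
    auxA s f B j =
      if IsOpen (f ⁻¹' (B j) ∩ s j (fun k => auxA s f B k.1)) ∧
          (f ⁻¹' (B j) ∩ s j (fun k => auxA s f B k.1)).Nonempty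
        then f ⁻¹' (B j) ∩ s j (fun k => auxA s f B k.1) else Set.univ := by
  rw [auxA]

theorem auxA_congr (s : GameStrategy X κ) (f : X → Y) (B₁ B₂ : κ.ord.ToType → Set Y)
    (j : κ.ord.ToType) (h : ∀ k ≤ j, B₁ k = B₂ k) : auxA s f B₁ j = auxA s f B₂ j := by
  induction j using WellFoundedLT.induction with
  | _ j ih =>
    rw [auxA_def, auxA_def]
    have h1 : B₁ j = B₂ j := h j le_rfl
    have h2 : (fun k : {k // k < j} => auxA s f B₁ k.1) =
        (fun k : {k // k < j} => auxA s f B₂ k.1) := by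
      funext k
      exact ih k.1 k.2 (fun m hm => h m (hm.trans k.2.le))
    simp only [h1, h2]

theorem auxA_open_nonempty [Nonempty X] (s : GameStrategy X κ) (f : X → Y)
    (B : κ.ord.ToType → Set Y) (j : κ.ord.ToType) :
    IsOpen (auxA s f B j) ∧ (auxA s f B j).Nonempty := by
  rw [auxA_def]
  split
  · assumption
  · exact ⟨isOpen_univ, Set.univ_nonempty⟩

end AuxSkeletal

/-- If `f : X → Y` is a skeletal map and `X` is `κ`-favorable for an
infinite cardinal `κ`, then `Y` is `κ`-favorable. -/
theorem skeletal_image_favorable (X Y : Type u) [TopologicalSpace X] [TopologicalSpace Y]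
    (f : X → Y) (hf : Skeletal f) (κ : Cardinal.{u}) (hκ : ℵ₀ ≤ κ)
    (hX : IsFavorable X κ) : IsFavorable Y κ := by
  classical
  obtain ⟨s, hs1, hs2⟩ := hX
  obtain ⟨hfc, hfs, hfsk⟩ := hf
  -- the index type is nonempty
  have hne : Nonempty κ.ord.ToType := by
    rw [Ordinal.toType_nonempty_iff_ne_zero]
    simp only [ne_eq, Cardinal.ord_eq_zero]
    exact ((aleph0_pos.trans_le hκ).ne')
  obtain ⟨i⟩ := hne
  -- X is nonempty
  have hXne : Nonempty X := by
    obtain ⟨i₀, -, hmin⟩ :=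
      (IsWellFounded.wf (α := κ.ord.ToType) (r := (· < ·))).has_min Set.univ ⟨i, trivial⟩
    obtain ⟨x, -⟩ := (hs1 i₀ (fun j => ∅) (fun j => absurd j.2 (hmin j.1 trivial))).2
    exact ⟨x⟩
  -- extend a partial play on Y to a full play
  set ext : (i : κ.ord.ToType) → ({j : κ.ord.ToType // j < i} → Set Y) →
      κ.ord.ToType → Set Y :=
    fun i g k => if h : k < i then g ⟨k, h⟩ else ∅ with hext
  -- the strategy on Y
  refine ⟨fun i g => interior (closure (f '' s i (fun k => auxA s f (ext i g) k.1))),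
    ?_, ?_⟩
  · intro i g hg
    have hs := hs1 i (fun k => auxA s f (ext i g) k.1)
      (fun k => auxA_open_nonempty s f (ext i g) k.1)
    obtain ⟨y, hy⟩ := hfsk _ hs.1 hs.2
    exact ⟨isOpen_interior, ⟨y, hy⟩⟩
  · intro B hB
    set A : κ.ord.ToType → Set X := auxA s f B with hA
    -- consistency of the extended plays with the full play
    have hcong : ∀ i : κ.ord.ToType,
        (fun k : {j : κ.ord.ToType // j < i} => auxA s f (ext i (fun j => B j.1)) k.1) =
        (fun k : {j : κ.ord.ToType // j < i} => A k.1) := by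
      intro i
      funext k
      refine auxA_congr s f _ B k.1 (fun m hm => ?_)
      simp only [hext]
      rw [dif_pos (lt_of_le_of_lt hm k.2)]
    -- the key unfolding: in a real play the fallback is never used
    have hkey : ∀ i : κ.ord.ToType,
        A i = f ⁻¹' (B i) ∩ s i (fun k => A k.1) := by
      intro i
      have hsi := hs1 i (fun k => A k.1) (fun k => auxA_open_nonempty s f B k.1)
      have hBt := (hB i).2
      beta_reduce at hBt
      rw [hcong i] at hBt
      -- the candidate is nonempty
      obtain ⟨y, hy⟩ := (hB i).1.2
      have hycl : y ∈ closure (f '' s i (fun k => A k.1)) :=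
        interior_subset (hBt hy)
      obtain ⟨z, hz1, x, hx1, hx2⟩ :=
        (mem_closure_iff.mp hycl (B i) (hB i).1.1 hy)
      have hcand : (f ⁻¹' (B i) ∩ s i (fun k => A k.1)).Nonempty :=
        ⟨x, by show f x ∈ B i; rw [hx2]; exact hz1, hx1⟩
      have hcop : IsOpen (f ⁻¹' (B i) ∩ s i (fun k => A k.1)) :=
        ((hB i).1.1.preimage hfc).inter hsi.1
      show auxA s f B i = _
      rw [auxA_def]
      exact if_pos ⟨hcop, hcand⟩
    -- X's strategy wins against A
    have hdenseA : Dense (⋃ i, A i) := by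
      refine hs2 A (fun i => ⟨auxA_open_nonempty s f B i, ?_⟩)
      rw [hkey i]
      exact Set.inter_subset_right
    -- hence ⋃ B is dense in Y
    rw [dense_iff_inter_open]
    intro W hW hWne
    obtain ⟨y, hy⟩ := hWne
    obtain ⟨x, hx⟩ := hfs y
    have hpre : (f ⁻¹' W).Nonempty := ⟨x, by rw [Set.mem_preimage, hx]; exact hy⟩
    obtain ⟨z, hz1, hz2⟩ := dense_iff_inter_open.mp hdenseA (f ⁻¹' W)
      (hW.preimage hfc) hpre
    obtain ⟨_, ⟨i, rfl⟩, hzi⟩ := hz2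
    have hz' : z ∈ A i := hzi
    have : z ∈ f ⁻¹' (B i) := by
      rw [hkey i] at hz'
      exact hz'.1
    exact ⟨f z, hz1, Set.mem_iUnion.mpr ⟨i, this⟩⟩
end

section
/- If Y is a dense subspace of a topological space X and κ is an infinite cardinal, then X is κ-favorable if and only if Y is κ-favorable. -/
open Cardinal Set Topology TopologicalSpace

universe u

section Aux

variable {X : Type u} [TopologicalSpace X] {Y : Set X} {κ : Cardinal.{u}}

open scoped Classical in
/-- Choose an open set in `X` restricting to a given open set of the subspace `Y`. -/
noncomputable def extOpen (Y : Set X) (V : Set Y) : Set X :=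
  if h : IsOpen V then Classical.choose (isOpen_induced_iff.mp h) else Set.univ

lemma extOpen_isOpen {V : Set Y} (h : IsOpen V) : IsOpen (extOpen Y V) := by
  rw [extOpen, dif_pos h]
  exact (Classical.choose_spec (isOpen_induced_iff.mp h)).1

lemma extOpen_preimage {V : Set Y} (h : IsOpen V) :
    (Subtype.val : Y → X) ⁻¹' (extOpen Y V) = V := by
  rw [extOpen, dif_pos h]
  exact (Classical.choose_spec (isOpen_induced_iff.mp h)).2

lemma subset_extOpen {V : Set Y} (h : IsOpen V) :
    Subtype.val '' V ⊆ extOpen Y V := by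
  rintro x ⟨y, hy, rfl⟩
  rw [← extOpen_preimage h] at hy
  exact hy

lemma extOpen_nonempty {V : Set Y} (h : IsOpen V) (hne : V.Nonempty) :
    (extOpen Y V).Nonempty := by
  obtain ⟨y, hy⟩ := hne
  exact ⟨y, subset_extOpen h ⟨y, hy, rfl⟩⟩

lemma extOpen_subset_closure (hY : Dense Y) {V : Set Y} (h : IsOpen V) :
    extOpen Y V ⊆ closure (Subtype.val '' V) := by
  have h1 : extOpen Y V ⊆ closure (extOpen Y V ∩ Y) :=
    hY.open_subset_closure_inter (extOpen_isOpen h)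
  have h2 : extOpen Y V ∩ Y = Subtype.val '' V := by
    conv_rhs => rw [← extOpen_preimage h]
    rw [Subtype.image_preimage_coe, Set.inter_comm]
  rwa [h2] at h1

open scoped Classical in
/-- The simulated play on `X` determined by a play `F` on the subspace `Y`
and a strategy `s` on `X` (with a fallback when Player II deviates). -/
noncomputable def playC (s : GameStrategy X κ) (F : κ.ord.ToType → Set Y) :
    κ.ord.ToType → Set X :=
  fun i => WellFounded.fix
    (wellFounded_lt : WellFounded ((· < ·) : κ.ord.ToType → κ.ord.ToType → Prop))
    (fun i rec =>
      if (extOpen Y (F i) ∩ s i (fun j => rec j.1 j.2)).Nonempty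
      then extOpen Y (F i) ∩ s i (fun j => rec j.1 j.2)
      else s i (fun j => rec j.1 j.2)) i

open scoped Classical in
lemma playC_eq (s : GameStrategy X κ) (F : κ.ord.ToType → Set Y) (i : κ.ord.ToType) :
    playC s F i =
      if (extOpen Y (F i) ∩ s i (fun j => playC s F j.1)).Nonempty
      then extOpen Y (F i) ∩ s i (fun j => playC s F j.1)
      else s i (fun j => playC s F j.1) := by
  show WellFounded.fix _ _ i = _
  rw [WellFounded.fix_eq]
  rfl

lemma playC_subset (s : GameStrategy X κ) (F : κ.ord.ToType → Set Y) (i : κ.ord.ToType) :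
    playC s F i ⊆ s i (fun j => playC s F j.1) := by
  rw [playC_eq]
  split_ifs
  · exact Set.inter_subset_right
  · exact subset_rfl

lemma playC_congr (s : GameStrategy X κ) (F G : κ.ord.ToType → Set Y) (i : κ.ord.ToType)
    (h : ∀ j ≤ i, F j = G j) : playC s F i = playC s G i := by
  induction i using WellFoundedLT.induction with
  | ind i IH =>
    have hfun : (fun j : {j : κ.ord.ToType // j < i} => playC s F j.1) =
        fun j => playC s G j.1 :=
      funext fun j => IH j.1 j.2 fun k hk => h k (hk.trans j.2.le)
    rw [playC_eq, playC_eq, h i le_rfl, hfun]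

lemma playC_good (s : GameStrategy X κ) (hs1 : ∀ (i : κ.ord.ToType)
      (f : {j : κ.ord.ToType // j < i} → Set X),
      (∀ j, IsOpen (f j) ∧ (f j).Nonempty) → IsOpen (s i f) ∧ (s i f).Nonempty)
    (F : κ.ord.ToType → Set Y) (i : κ.ord.ToType)
    (hF : ∀ j ≤ i, IsOpen (F j) ∧ (F j).Nonempty) :
    IsOpen (playC s F i) ∧ (playC s F i).Nonempty := by
  induction i using WellFoundedLT.induction with
  | ind i IH =>
    have hT : IsOpen (s i (fun j => playC s F j.1)) ∧
        (s i (fun j => playC s F j.1)).Nonempty :=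
      hs1 i _ fun j => IH j.1 j.2 fun k hk => hF k (hk.trans j.2.le)
    rw [playC_eq]
    split_ifs with hne
    · exact ⟨((extOpen_isOpen (hF i le_rfl).1).inter hT.1), hne⟩
    · exact hT

end Aux


/-- If `Y` is a dense subspace of `X` and `κ` is an infinite cardinal, then
`X` is `κ`-favorable if and only if `Y` is `κ`-favorable. -/
theorem favorable_iff_dense_subspace (X : Type u) [TopologicalSpace X] (Y : Set X)
    (hY : Dense Y) (κ : Cardinal.{u}) (hκ : ℵ₀ ≤ κ) :
    IsFavorable X κ ↔ IsFavorable Y κ := by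
  classical
  constructor
  · rintro ⟨s, hs1, hs2⟩
    -- extend a partial play on `Y` to a total function
    set ext : (i : κ.ord.ToType) → ({j : κ.ord.ToType // j < i} → Set Y) →
        κ.ord.ToType → Set Y :=
      fun i f j => if h : j < i then f ⟨j, h⟩ else Set.univ with hext
    refine ⟨fun i f => Subtype.val ⁻¹' (s i (fun j => playC s (ext i f) j.1)), ?_, ?_⟩
    · intro i f hf
      have hFgood : ∀ j : κ.ord.ToType, j < i →
          IsOpen (ext i f j) ∧ (ext i f j).Nonempty := by
        intro j hj
        simp only [hext, dif_pos hj]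
        exact hf _
      have hT : IsOpen (s i (fun j => playC s (ext i f) j.1)) ∧
          (s i (fun j => playC s (ext i f) j.1)).Nonempty :=
        hs1 i _ fun j => playC_good s hs1 _ j.1
          (fun k hk => hFgood k (lt_of_le_of_lt hk j.2))
      refine ⟨hT.1.preimage continuous_subtype_val, ?_⟩
      obtain ⟨x, hx, hxY⟩ := hY.inter_open_nonempty _ hT.1 hT.2
      exact ⟨⟨x, hxY⟩, hx⟩
    · intro B hB
      -- the play on the subspace follows the strategy; the simulated play on `X`
      -- then also follows `s`
      have hkey : ∀ i, Subtype.val '' (B i) ⊆ playC s B i ∧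
          playC s B i ⊆ closure (Subtype.val '' (B i)) := by
        intro i
        have hcongr : (fun j : {j : κ.ord.ToType // j < i} => playC s (ext i fun j => B j.1) j.1)
            = fun j => playC s B j.1 := by
          funext j
          refine playC_congr s _ B j.1 fun k hk => ?_
          simp only [hext, dif_pos (lt_of_le_of_lt hk j.2)]
        have hBsub : Subtype.val '' (B i) ⊆
            extOpen Y (B i) ∩ s i (fun j => playC s B j.1) := by
          rintro x ⟨y, hy, rfl⟩
          refine ⟨subset_extOpen (hB i).1.1 ⟨y, hy, rfl⟩, ?_⟩
          have h4 : B i ⊆ Subtype.val ⁻¹'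
              (s i fun j => playC s (ext i fun j => B j.1) j.1) := (hB i).2
          rw [hcongr] at h4
          exact h4 hy
        have hne : (extOpen Y (B i) ∩ s i (fun j => playC s B j.1)).Nonempty := by
          obtain ⟨y, hy⟩ := (hB i).1.2
          exact ⟨y, hBsub ⟨y, hy, rfl⟩⟩
        have heq : playC s B i = extOpen Y (B i) ∩ s i (fun j => playC s B j.1) := by
          rw [playC_eq, if_pos hne]
        constructor
        · rw [heq]; exact hBsub
        · rw [heq]
          exact Set.inter_subset_left.trans (extOpen_subset_closure hY (hB i).1.1)
      have hCwin : ∀ i, (IsOpen (playC s B i) ∧ (playC s B i).Nonempty) ∧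
          playC s B i ⊆ s i (fun j => playC s B j.1) := fun i =>
        ⟨playC_good s hs1 B i fun j _ => (hB j).1, playC_subset s B i⟩
      have hdense := hs2 _ hCwin
      rw [dense_iff_inter_open]
      intro V hV hVne
      have hU : IsOpen (extOpen Y V) := extOpen_isOpen hV
      obtain ⟨x, hxU, hxC⟩ := (dense_iff_inter_open.mp hdense) _ hU
        (extOpen_nonempty hV hVne)
      obtain ⟨_, ⟨i, rfl⟩, hxi⟩ := hxC
      have hx' : x ∈ closure (Subtype.val '' (B i)) := (hkey i).2 hxi
      obtain ⟨z, hzU, hzB⟩ := (mem_closure_iff.mp hx') _ hU hxU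
      obtain ⟨y, hy, rfl⟩ := hzB
      have hyV : y ∈ V := by rw [← extOpen_preimage hV]; exact hzU
      exact ⟨y, hyV, Set.mem_iUnion.mpr ⟨i, hy⟩⟩
  · rintro ⟨s, hs1, hs2⟩
    refine ⟨fun i f => extOpen Y (s i (fun j => Subtype.val ⁻¹' (f j))), ?_, ?_⟩
    · intro i f hf
      have h : ∀ j, IsOpen (Subtype.val ⁻¹' (f j) : Set Y) ∧
          (Subtype.val ⁻¹' (f j) : Set Y).Nonempty := by
        intro j
        refine ⟨(hf j).1.preimage continuous_subtype_val, ?_⟩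
        obtain ⟨x, hx, hxY⟩ := hY.inter_open_nonempty _ (hf j).1 (hf j).2
        exact ⟨⟨x, hxY⟩, hx⟩
      obtain ⟨ho, hne⟩ := hs1 i _ h
      exact ⟨extOpen_isOpen ho, extOpen_nonempty ho hne⟩
    · intro C hC
      set B : κ.ord.ToType → Set Y := fun i => Subtype.val ⁻¹' (C i) with hB
      have hopen : ∀ j, IsOpen (B j) ∧ (B j).Nonempty := by
        intro j
        obtain ⟨⟨ho', hne'⟩, _⟩ := hC j
        refine ⟨ho'.preimage continuous_subtype_val, ?_⟩
        obtain ⟨x, hx, hxY⟩ := hY.inter_open_nonempty _ ho' hne'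
        exact ⟨⟨x, hxY⟩, hx⟩
      have hBwin : ∀ i, (IsOpen (B i) ∧ (B i).Nonempty) ∧
          B i ⊆ s i (fun j => B j.1) := by
        intro i
        refine ⟨hopen i, ?_⟩
        intro y hy
        have h1 : (y : X) ∈ extOpen Y (s i (fun j => B j.1)) := (hC i).2 hy
        rw [← extOpen_preimage (hs1 i _ fun j => hopen j.1).1]
        exact h1
      have hdense := hs2 B hBwin
      rw [dense_iff_inter_open]
      intro U hU hUne
      obtain ⟨x, hxU, hxY⟩ := hY.inter_open_nonempty _ hU hUne
      have : ((Subtype.val ⁻¹' U : Set Y) ∩ ⋃ i, B i).Nonempty := by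
        refine (dense_iff_inter_open.mp hdense) _ (hU.preimage continuous_subtype_val) ?_
        exact ⟨⟨x, hxY⟩, hxU⟩
      obtain ⟨y, hyU, hyB⟩ := this
      obtain ⟨_, ⟨i, rfl⟩, hyi⟩ := hyB
      exact ⟨y, hyU, Set.mem_iUnion.mpr ⟨i, hyi⟩⟩
end

section
/- Let κ be an infinite cardinal. If {X_s : s ∈ S} is a family of topological spaces each belonging to the class C_κ, then the Cartesian product Π_{s∈S} X_s belongs to C_κ. -/
open Cardinal Set Topology TopologicalSpace

universe u

namespace ClassCProd

variable {S : Type u} {Is : S → Type u} [∀ s, PartialOrder (Is s)]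

/-- generic helper: bonding maps along (defeq-irrelevant) proofs of reflexive `≤` are identity -/
theorem InvSys_map_self {I : Type u} [Preorder I] (D : InvSys I) {a : I} (h : a ≤ a)
    (x : D.obj a) : D.map h x = x := D.map_id a x

/-- the support of a point of the product index set -/
def supp (bot : ∀ s, Is s) (σ : ∀ s, Is s) : Set S := {s | σ s ≠ bot s}

/-- the index set of the product system -/
def PIdx (bot : ∀ s, Is s) (κ : Cardinal.{u}) : Type u :=
  {σ : ∀ s, Is s // #↥(supp bot σ) ≤ κ}

instance (bot : ∀ s, Is s) (κ : Cardinal.{u}) : PartialOrder (PIdx (Is := Is) bot κ) :=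
  inferInstanceAs (PartialOrder (Subtype _))

variable (Ds : ∀ s, InvSys (Is s)) (bot : ∀ s, Is s) (κ : Cardinal.{u})

/-- the product inverse system -/
def PSys : InvSys (PIdx (Is := Is) bot κ) where
  obj σ := ∀ s, (Ds s).obj (σ.1 s)
  topo σ := @Pi.topologicalSpace _ _ (fun s => (Ds s).topo (σ.1 s))
  map h x := fun s => (Ds s).map (h s) (x s)
  map_id σ x := funext fun s => (Ds s).map_id _ (x s)
  map_comp h₁ h₂ x := funext fun s => (Ds s).map_comp _ _ (x s)
  map_cont {ρ σ} h := by
    letI := fun s => (Ds s).topo (σ.1 s)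
    letI := fun s => (Ds s).topo (ρ.1 s)
    exact continuous_pi fun s => ((Ds s).map_cont (h s)).comp (continuous_apply s)
  map_surj {ρ σ} h y :=
    ⟨fun s => ((Ds s).map_surj (h s) (y s)).choose,
     funext fun s => ((Ds s).map_surj (h s) (y s)).choose_spec⟩


variable {S : Type u} {Is : S → Type u} [∀ s, PartialOrder (Is s)]

section Bot

variable {I : Type u} [Preorder I] {κ : Cardinal.{u}} (D : InvSys I)

theorem chainLimit_empty_subsingleton : Subsingleton (D.chainLimit (∅ : Set I)) :=
  ⟨fun x y => Subtype.ext (funext fun a => absurd a.2 (Set.notMem_empty _))⟩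

theorem chainLimit_empty_nonempty : Nonempty (D.chainLimit (∅ : Set I)) :=
  ⟨⟨fun a => absurd a.2 (Set.notMem_empty _),
    fun a => absurd a.2 (Set.notMem_empty _)⟩⟩

theorem isLUB_empty_iff {b : I} : IsLUB (∅ : Set I) b ↔ ∀ i, b ≤ i := by
  constructor
  · intro h i
    exact h.2 (fun x hx => absurd hx (Set.notMem_empty _))
  · intro h
    exact ⟨fun x hx => absurd hx (Set.notMem_empty _), fun x _ => h x⟩

theorem obj_subsingleton_of_bot (hc : D.IsComplete κ) {b : I} (hb : ∀ i, b ≤ i) :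
    Subsingleton (D.obj b) ∧ Nonempty (D.obj b) := by
  have hchain : IsChain (· ≤ ·) (∅ : Set I) := by
    intro x hx; exact absurd hx (Set.notMem_empty _)
  have hcard : #(↥(∅ : Set I)) ≤ κ := by simp
  have hlub : IsLUB (∅ : Set I) b := (isLUB_empty_iff (I := I)).2 hb
  have hh := hc.2 ∅ hchain hcard b hlub
  letI := D.topo b
  have hbij := hh.bijective
  constructor
  · refine ⟨fun x y => hbij.1 ?_⟩
    exact (chainLimit_empty_subsingleton D).allEq _ _
  · obtain ⟨z⟩ := chainLimit_empty_nonempty D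
    obtain ⟨x, -⟩ := hbij.2 z
    exact ⟨x⟩

theorem obj_nonempty (hc : D.IsComplete κ) {b : I} (hb : ∀ i, b ≤ i) (i : I) :
    Nonempty (D.obj i) := by
  obtain ⟨x⟩ := (obj_subsingleton_of_bot D hc hb).2
  obtain ⟨y, -⟩ := D.map_surj (hb i) x
  exact ⟨y⟩

end Bot

variable (Ds : ∀ s, InvSys (Is s)) (bot : ∀ s, Is s) (κ : Cardinal.{u})

theorem supp_bot : supp bot (fun s => bot s) = ∅ := by
  ext s; simp [supp]

/-- the bottom element of the product index set -/
def pbot (hκ : ℵ₀ ≤ κ) : PIdx (Is := Is) bot κ :=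
  ⟨fun s => bot s, by rw [supp_bot]; simp⟩

theorem pbot_le (hκ : ℵ₀ ≤ κ) (hbot : ∀ s (i : Is s), bot s ≤ i) (σ : PIdx (Is := Is) bot κ) :
    pbot bot κ hκ ≤ σ := fun s => hbot s (σ.1 s)

theorem pidx_directed (hκ : ℵ₀ ≤ κ) (hbot : ∀ s (i : Is s), bot s ≤ i)
    (hdir : ∀ s, IsDirected (Is s) (· ≤ ·)) :
    IsDirected (PIdx (Is := Is) bot κ) (· ≤ ·) := by
  constructor
  intro σ τ
  have hub : ∀ s, ∃ z : Is s, σ.1 s ≤ z ∧ τ.1 s ≤ z := fun s =>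
    @directed_of (Is s) (· ≤ ·) (hdir s) (σ.1 s) (τ.1 s)
  classical
  refine ⟨⟨fun s => if σ.1 s = bot s ∧ τ.1 s = bot s then bot s else (hub s).choose, ?_⟩, ?_, ?_⟩
  · have hsub : supp bot (fun s => if σ.1 s = bot s ∧ τ.1 s = bot s then bot s
        else (hub s).choose) ⊆ supp bot σ.1 ∪ supp bot τ.1 := by
      intro s hs
      by_contra hns
      simp only [supp, Set.mem_union, Set.mem_setOf_eq, not_or, not_not] at hns
      simp only [supp, Set.mem_setOf_eq, if_pos (And.intro hns.1 hns.2)] at hs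
      exact hs rfl
    calc #↥(supp bot _) ≤ #↥(supp bot σ.1 ∪ supp bot τ.1) := Cardinal.mk_le_mk_of_subset hsub
      _ ≤ #↥(supp bot σ.1) + #↥(supp bot τ.1) := Cardinal.mk_union_le _ _
      _ ≤ κ := Cardinal.add_le_of_le hκ σ.2 τ.2
  · intro s
    by_cases h : σ.1 s = bot s ∧ τ.1 s = bot s
    · simp only [if_pos h]; exact h.1.le
    · simp only [if_neg h]; exact (hub s).choose_spec.1
  · intro s
    by_cases h : σ.1 s = bot s ∧ τ.1 s = bot s
    · simp only [if_pos h]; exact h.2.le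
    · simp only [if_neg h]; exact (hub s).choose_spec.2

section Chains

variable {S : Type u} {Is : S → Type u} [∀ s, PartialOrder (Is s)]
variable {Ds : ∀ s, InvSys (Is s)} {bot : ∀ s, Is s} {κ : Cardinal.{u}}
/-- the coordinate projections of a chain -/
def chProj (A : Set (PIdx (Is := Is) bot κ)) (s : S) : Set (Is s) :=
  (fun ρ : PIdx bot κ => ρ.1 s) '' A

theorem chProj_chain {A : Set (PIdx (Is := Is) bot κ)} (hA : IsChain (· ≤ ·) A) (s : S) :
    IsChain (· ≤ ·) (chProj A s) :=
  IsChain.image_of_map_rel _ _ _ (fun _ _ h => h s) hA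

theorem chProj_card {A : Set (PIdx (Is := Is) bot κ)} (hcard : #↥A ≤ κ) (s : S) :
    #↥(chProj A s) ≤ κ :=
  le_trans Cardinal.mk_image_le hcard

/-- the pointwise supremum of a chain, as an element of the product index set -/
noncomputable def chSup (hκ : ℵ₀ ≤ κ) (hbot : ∀ s (i : Is s), bot s ≤ i)
    (hcomp : ∀ s, (Ds s).IsComplete κ) (A : Set (PIdx (Is := Is) bot κ)) (hA : IsChain (· ≤ ·) A)
    (hcard : #↥A ≤ κ) : PIdx (Is := Is) bot κ := by
  refine ⟨fun s => ((hcomp s).1 (chProj A s) (chProj_chain hA s) (chProj_card hcard s)).choose, ?_⟩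
  have hsupp : supp bot (fun s =>
      ((hcomp s).1 (chProj A s) (chProj_chain hA s) (chProj_card hcard s)).choose)
      ⊆ ⋃ a ∈ A, supp bot a.1 := by
    intro s hs
    simp only [supp, Set.mem_setOf_eq] at hs
    by_contra hns
    apply hs
    have hall : ∀ a : PIdx (Is := Is) bot κ, a ∈ A → a.1 s = bot s := by
      intro a ha
      by_contra hne
      exact hns (Set.mem_biUnion ha hne)
    have h1 := ((hcomp s).1 (chProj A s) (chProj_chain hA s) (chProj_card hcard s)).choose_spec
    have h2 : IsLUB (chProj A s) (bot s) := by
      constructor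
      · rintro c ⟨a, ha, rfl⟩
        exact (hall a ha).le
      · intro c _
        exact hbot s c
    exact h1.unique h2
  refine le_trans (Cardinal.mk_le_mk_of_subset hsupp) ?_
  rcases Set.eq_empty_or_nonempty A with h | h
  · subst h
    simp
  · have : Nonempty ↥A := h.to_subtype
    refine le_trans (Cardinal.mk_biUnion_le _ _) ?_
    have h1 : ⨆ a : ↥A, #↥(supp bot (a : PIdx (Is := Is) bot κ).1) ≤ κ :=
      ciSup_le' fun a => (a : PIdx (Is := Is) bot κ).2
    calc #↥A * ⨆ a : ↥A, #↥(supp bot (a : PIdx (Is := Is) bot κ).1) ≤ κ * κ :=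
          mul_le_mul' hcard h1
      _ = κ := Cardinal.mul_eq_self hκ

theorem chSup_isLUB (hκ : ℵ₀ ≤ κ) (hbot : ∀ s (i : Is s), bot s ≤ i)
    (hcomp : ∀ s, (Ds s).IsComplete κ) (A : Set (PIdx (Is := Is) bot κ)) (hA : IsChain (· ≤ ·) A)
    (hcard : #↥A ≤ κ) : IsLUB A (chSup hκ hbot hcomp A hA hcard) := by
  constructor
  · intro a ha s
    exact ((hcomp s).1 (chProj A s) (chProj_chain hA s) (chProj_card hcard s)).choose_spec.1
      ⟨a, ha, rfl⟩
  · intro c hc s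
    refine ((hcomp s).1 (chProj A s) (chProj_chain hA s) (chProj_card hcard s)).choose_spec.2 ?_
    rintro i ⟨a, ha, rfl⟩
    exact hc ha s

/-- the coordinates of any LUB of a chain are LUBs of the projected chains -/
theorem isLUB_coord (hκ : ℵ₀ ≤ κ) (hbot : ∀ s (i : Is s), bot s ≤ i)
    (hcomp : ∀ s, (Ds s).IsComplete κ) {A : Set (PIdx (Is := Is) bot κ)} (hA : IsChain (· ≤ ·) A)
    (hcard : #↥A ≤ κ) {σ : PIdx (Is := Is) bot κ} (hσ : IsLUB A σ) (s : S) :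
    IsLUB (chProj A s) (σ.1 s) := by
  have h1 := chSup_isLUB hκ hbot hcomp A hA hcard
  have h2 : σ = chSup hκ hbot hcomp A hA hcard := hσ.unique h1
  have h3 := ((hcomp s).1 (chProj A s) (chProj_chain hA s) (chProj_card hcard s)).choose_spec
  rw [h2]
  exact h3

end Chains
section Core

variable {S : Type u} {Is : S → Type u} [∀ s, PartialOrder (Is s)]
variable {Ds : ∀ s, InvSys (Is s)} {bot : ∀ s, Is s} {κ : Cardinal.{u}}

theorem key {A : Set (PIdx (Is := Is) bot κ)} (hA : IsChain (· ≤ ·) A)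
    {a b : PIdx (Is := Is) bot κ} (ha : a ∈ A) (hb : b ∈ A) {s : S} {c : Is s}
    (h1 : c ≤ a.1 s) (h2 : c ≤ b.1 s) (y : (PSys Ds bot κ).chainLimit A) :
    (Ds s).map h1 (y.1 ⟨a, ha⟩ s) = (Ds s).map h2 (y.1 ⟨b, hb⟩ s) := by
  rcases hA.total ha hb with hab | hba
  · have hth : (Ds s).map (hab s) (y.1 ⟨b, hb⟩ s) = y.1 ⟨a, ha⟩ s :=
      congrFun (y.2 ⟨a, ha⟩ ⟨b, hb⟩ hab) s
    calc (Ds s).map h1 (y.1 ⟨a, ha⟩ s)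
        = (Ds s).map h1 ((Ds s).map (hab s) (y.1 ⟨b, hb⟩ s)) := by rw [hth]
      _ = (Ds s).map h2 (y.1 ⟨b, hb⟩ s) := (Ds s).map_comp _ _ _
  · have hth : (Ds s).map (hba s) (y.1 ⟨a, ha⟩ s) = y.1 ⟨b, hb⟩ s :=
      congrFun (y.2 ⟨b, hb⟩ ⟨a, ha⟩ hba) s
    calc (Ds s).map h1 (y.1 ⟨a, ha⟩ s)
        = (Ds s).map h2 ((Ds s).map (hba s) (y.1 ⟨a, ha⟩ s)) := ((Ds s).map_comp _ _ _).symm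
      _ = (Ds s).map h2 (y.1 ⟨b, hb⟩ s) := by rw [hth]

/-- restriction of a thread over `A` to a thread over the projected chain at `s` -/
noncomputable def rmap {A : Set (PIdx (Is := Is) bot κ)} (hA : IsChain (· ≤ ·) A) (s : S)
    (y : (PSys Ds bot κ).chainLimit A) : (Ds s).chainLimit (chProj A s) := by
  refine ⟨fun c => (Ds s).map (c.2.choose_spec.2.ge) (y.1 ⟨c.2.choose, c.2.choose_spec.1⟩ s), ?_⟩
  intro c d h
  calc (Ds s).map h ((Ds s).map (d.2.choose_spec.2.ge) (y.1 ⟨d.2.choose, d.2.choose_spec.1⟩ s))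
      = (Ds s).map (h.trans d.2.choose_spec.2.ge) (y.1 ⟨d.2.choose, d.2.choose_spec.1⟩ s) :=
        (Ds s).map_comp _ _ _
    _ = (Ds s).map (c.2.choose_spec.2.ge) (y.1 ⟨c.2.choose, c.2.choose_spec.1⟩ s) :=
        key hA _ _ _ _ y

theorem rmap_cont {A : Set (PIdx (Is := Is) bot κ)} (hA : IsChain (· ≤ ·) A) (s : S) :
    Continuous (rmap (Ds := Ds) hA s) := by
  letI := fun (d : ↥(chProj A s)) => (Ds s).topo d.1
  letI := fun (a : ↥A) => (PSys Ds bot κ).topo a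
  apply continuous_induced_rng.2
  apply continuous_pi
  intro c
  letI := fun s' => (Ds s').topo (c.2.choose.1 s')
  exact ((Ds s).map_cont _).comp
    ((continuous_apply s).comp ((continuous_apply _).comp continuous_subtype_val))

theorem rmap_tcl {A : Set (PIdx (Is := Is) bot κ)} (hA : IsChain (· ≤ ·) A)
    {σ : PIdx (Is := Is) bot κ} (hσ : IsLUB A σ) (s : S)
    (hlub : IsLUB (chProj A s) (σ.1 s)) (x : (PSys Ds bot κ).obj σ) :
    rmap (Ds := Ds) hA s ((PSys Ds bot κ).toChainLimit A σ (fun _ ha => hσ.1 ha) x)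
      = (Ds s).toChainLimit (chProj A s) (σ.1 s) (fun _ hc => hlub.1 hc) (x s) := by
  apply Subtype.ext
  funext c
  exact (Ds s).map_comp _ _ _

end Core
section Main

variable {S : Type u} {Is : S → Type u} [∀ s, PartialOrder (Is s)]
variable {Ds : ∀ s, InvSys (Is s)} {bot : ∀ s, Is s} {κ : Cardinal.{u}}

theorem psys_complete_homeo (hκ : ℵ₀ ≤ κ) (hbot : ∀ s (i : Is s), bot s ≤ i)
    (hcomp : ∀ s, (Ds s).IsComplete κ) {A : Set (PIdx (Is := Is) bot κ)}
    (hA : IsChain (· ≤ ·) A) (hcard : #↥A ≤ κ) {σ : PIdx (Is := Is) bot κ}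
    (hσ : IsLUB A σ) :
    @IsHomeomorph _ _ ((PSys Ds bot κ).topo σ) ((PSys Ds bot κ).instTopChainLimit A)
      ((PSys Ds bot κ).toChainLimit A σ fun _ ha => hσ.1 ha) := by
  set P := PSys Ds bot κ with hP
  letI : TopologicalSpace (P.obj σ) := P.topo σ
  letI : ∀ s, TopologicalSpace ((Ds s).obj (σ.1 s)) := fun s => (Ds s).topo (σ.1 s)
  have hlub : ∀ s, IsLUB (chProj A s) (σ.1 s) := isLUB_coord hκ hbot hcomp hA hcard hσ
  have hhom : ∀ s, @IsHomeomorph _ _ ((Ds s).topo (σ.1 s))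
      ((Ds s).instTopChainLimit (chProj A s))
      ((Ds s).toChainLimit (chProj A s) (σ.1 s) fun _ hc => (hlub s).1 hc) := fun s =>
    (hcomp s).2 (chProj A s) (chProj_chain hA s) (chProj_card hcard s) (σ.1 s) (hlub s)
  set tcl := P.toChainLimit A σ (fun _ ha => hσ.1 ha) with htcl
  -- continuity
  have hcont : Continuous tcl := by
    apply continuous_induced_rng.2
    letI := fun (a : ↥A) => P.topo a
    apply continuous_pi
    intro a
    exact P.map_cont (hσ.1 a.2)
  -- injectivity
  have hinj : Function.Injective tcl := by
    intro x y hxy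
    funext s
    apply ((hhom s).bijective).1
    apply Subtype.ext
    funext c
    obtain ⟨a, ha, hac⟩ := c.2
    have h1 : P.map (hσ.1 ha) x = P.map (hσ.1 ha) y :=
      congrFun (congrArg Subtype.val hxy) ⟨a, ha⟩
    have h2 : (Ds s).map ((hσ.1 ha) s) (x s) = (Ds s).map ((hσ.1 ha) s) (y s) :=
      congrFun h1 s
    calc (Ds s).map ((hlub s).1 c.2) (x s)
        = (Ds s).map hac.ge ((Ds s).map ((hσ.1 ha) s) (x s)) := ((Ds s).map_comp _ _ _).symm
      _ = (Ds s).map hac.ge ((Ds s).map ((hσ.1 ha) s) (y s)) := by rw [h2]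
      _ = (Ds s).map ((hlub s).1 c.2) (y s) := (Ds s).map_comp _ _ _
  -- surjectivity
  have hsurj : Function.Surjective tcl := by
    intro y
    have hsec : ∀ s, ∃ z : (Ds s).obj (σ.1 s),
        (Ds s).toChainLimit (chProj A s) (σ.1 s) (fun _ hc => (hlub s).1 hc) z
          = rmap (Ds := Ds) hA s y := fun s => ((hhom s).bijective).2 _
    choose z hz using hsec
    refine ⟨z, ?_⟩
    apply Subtype.ext
    funext a
    funext s
    have c2 : a.1.1 s ∈ chProj A s := ⟨a.1, a.2, rfl⟩
    have h2 : (Ds s).map ((hlub s).1 c2) (z s)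
        = (Ds s).map (c2.choose_spec.2.ge) (y.1 ⟨c2.choose, c2.choose_spec.1⟩ s) :=
      congrFun (congrArg Subtype.val (hz s)) ⟨a.1.1 s, c2⟩
    have hkey := key (s := s) hA c2.choose_spec.1 a.2 c2.choose_spec.2.ge
      (le_refl (a.1.1 s)) y
    exact h2.trans (hkey.trans (InvSys_map_self (Ds s) _ _))
  -- inducing
  have hind : Topology.IsInducing tcl := by
    constructor
    have hle1 : P.topo σ ≤ TopologicalSpace.induced tcl (P.instTopChainLimit A) :=
      continuous_iff_le_induced.1 hcont
    have hle2 : TopologicalSpace.induced tcl (P.instTopChainLimit A) ≤ P.topo σ := by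
      show TopologicalSpace.induced tcl (P.instTopChainLimit A)
        ≤ ⨅ s, TopologicalSpace.induced (fun x : P.obj σ => x s) ((Ds s).topo (σ.1 s))
      refine le_iInf fun s => ?_
      letI t' : TopologicalSpace (P.obj σ) := TopologicalSpace.induced tcl (P.instTopChainLimit A)
      rw [← continuous_iff_le_induced]
      obtain ⟨e, he⟩ := isHomeomorph_iff_exists_homeomorph.1 (hhom s)
      have heval : ∀ x : P.obj σ, e.symm (rmap (Ds := Ds) hA s (tcl x)) = x s := by
        intro x
        apply e.injective
        rw [Homeomorph.apply_symm_apply]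
        have := rmap_tcl (Ds := Ds) hA hσ s (hlub s) x
        rw [he]
        exact this
      have hc2 : Continuous[t', _] (fun x : P.obj σ => e.symm (rmap (Ds := Ds) hA s (tcl x))) :=
        e.symm.continuous.comp ((rmap_cont hA s).comp continuous_induced_dom)
      exact (funext heval : _ = fun x : P.obj σ => x s) ▸ hc2
    exact le_antisymm hle1 hle2
  exact isHomeomorph_iff_exists_homeomorph.2
    ⟨Equiv.toHomeomorphOfIsInducing (Equiv.ofBijective tcl ⟨hinj, hsurj⟩) hind, rfl⟩

end Main
section Weight

variable {S : Type u}

theorem tweight_set_nonempty (Y : Type u) (t : TopologicalSpace Y) :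
    {c : Cardinal.{u} | ∃ B : Set (Set Y),
      @TopologicalSpace.IsTopologicalBasis Y t B ∧ #B = c}.Nonempty :=
  ⟨#{U : Set Y | @IsOpen Y t U}, {U | @IsOpen Y t U},
    @TopologicalSpace.isTopologicalBasis_opens Y t, rfl⟩

theorem exists_basis_card_le (Y : Type u) (t : TopologicalSpace Y) {κ : Cardinal.{u}}
    (h : tweight Y t ≤ κ) : ∃ B : Set (Set Y),
      @TopologicalSpace.IsTopologicalBasis Y t B ∧ #B ≤ κ := by
  have hmem := csInf_mem (tweight_set_nonempty Y t)
  obtain ⟨B, hB, hBc⟩ := hmem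
  exact ⟨B, hB, hBc.le.trans h⟩

theorem tweight_le_of_basis {Y : Type u} {t : TopologicalSpace Y} {κ : Cardinal.{u}}
    (B : Set (Set Y)) (hB : @TopologicalSpace.IsTopologicalBasis Y t B) (hc : #B ≤ κ) :
    tweight Y t ≤ κ :=
  le_trans (csInf_le' ⟨B, hB, rfl⟩) hc

theorem mk_finset_le (α : Type u) {κ : Cardinal.{u}} (hκ : ℵ₀ ≤ κ) (hα : #α ≤ κ) :
    #(Finset α) ≤ κ := by
  classical
  have hsurj : Function.Surjective (fun l : List α => l.toFinset) := fun F =>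
    ⟨F.toList, F.toList_toFinset⟩
  refine le_trans (Cardinal.mk_le_of_surjective hsurj) ?_
  refine le_trans (Cardinal.mk_list_le_max α) ?_
  exact sup_le hκ hα

/-- purely cardinal bound for products over subsingleton-off-a-small-set with small bases -/
theorem tweight_pi_le {κ : Cardinal.{u}} (hκ : ℵ₀ ≤ κ) (Y : S → Type u)
    (t : ∀ s, TopologicalSpace (Y s)) (T : Set S) (hT : #T ≤ κ)
    (hsub : ∀ s ∉ T, Subsingleton (Y s)) (hw : ∀ s, tweight (Y s) (t s) ≤ κ) :
    tweight (∀ s, Y s) (@Pi.topologicalSpace S Y t) ≤ κ := by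
  classical
  letI := t
  choose B hB hBc using fun s => exists_basis_card_le (Y s) (t s) (hw s)
  -- the candidate basis
  set 𝔅 : Set (Set (∀ s, Y s)) := {V | ∃ (F : Finset S) (U : ∀ s, Set (Y s)),
    ↑F ⊆ T ∧ (∀ s ∈ F, U s ∈ B s) ∧ V = (↑F : Set S).pi U} with h𝔅
  have hbasis : TopologicalSpace.IsTopologicalBasis 𝔅 := by
    apply TopologicalSpace.isTopologicalBasis_of_isOpen_of_nhds
    · rintro V ⟨F, U, -, hU, rfl⟩
      exact isOpen_set_pi F.finite_toSet fun s hs => (hB s).isOpen (hU s hs)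
    · intro a u ha hu
      obtain ⟨F₀, v, hv, hsub'⟩ := isOpen_pi_iff.1 hu a ha
      have href : ∀ s ∈ F₀, ∃ w ∈ B s, a s ∈ w ∧ w ⊆ v s := fun s hs =>
        (hB s).exists_subset_of_mem_open (hv s hs).2 (hv s hs).1
      choose w hw1 hw2 hw3 using href
      set F : Finset S := F₀.filter (· ∈ T) with hF
      set U : ∀ s, Set (Y s) := fun s => if h : s ∈ F₀ then w s h else Set.univ with hU
      refine ⟨(↑F : Set S).pi U, ⟨F, U, ?_, ?_, rfl⟩, ?_, ?_⟩
      · intro s hs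
        simp only [hF, Finset.coe_filter, Set.mem_setOf_eq] at hs
        exact hs.2
      · intro s hs
        simp only [hF, Finset.mem_filter] at hs
        simp only [hU, dif_pos hs.1]
        exact hw1 s hs.1
      · intro s hs
        simp only [hF, Finset.coe_filter, Set.mem_setOf_eq] at hs
        simp only [hU, dif_pos hs.1]
        exact hw2 s hs.1
      · intro z hz
        apply hsub'
        intro s hs
        have hs' : s ∈ F₀ := hs
        by_cases hsT : s ∈ T
        · have hsF : s ∈ F := by simp [hF, Finset.mem_filter, hs', hsT]
          have hzs := hz s (by exact_mod_cast hsF)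
          simp only [hU, dif_pos hs'] at hzs
          exact hw3 s hs' hzs
        · have : z s = a s := @Subsingleton.elim _ (hsub s hsT) _ _
          rw [this]
          exact (hv s hs').2
  -- cardinality of the basis
  have hcard : #𝔅 ≤ κ := by
    -- encode basis elements
    let Ω := (F : Finset ↥T) × (∀ i : {x // x ∈ F}, {V : Set (Y i.1.1) // V ∈ B i.1.1})
    have hΩ : #Ω ≤ κ := by
      rw [Cardinal.mk_sigma]
      calc Cardinal.sum (fun F : Finset ↥T =>
            #(∀ i : {x // x ∈ F}, {V : Set (Y i.1.1) // V ∈ B i.1.1}))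
          ≤ Cardinal.sum (fun _ : Finset ↥T => κ) := by
            apply Cardinal.sum_le_sum
            intro F
            rw [Cardinal.mk_pi]
            calc Cardinal.prod (fun i : {x // x ∈ F} => #{V : Set (Y i.1.1) // V ∈ B i.1.1})
                ≤ Cardinal.prod (fun _ : {x // x ∈ F} => κ) :=
                  Cardinal.prod_le_prod _ _ fun i => (hBc i.1.1)
              _ = κ ^ #{x // x ∈ F} := Cardinal.prod_const' _ _
              _ ≤ κ := by
                  rw [Cardinal.mk_coe_finset]
                  exact Cardinal.pow_le hκ (Cardinal.nat_lt_aleph0 _)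
        _ = #(Finset ↥T) * κ := Cardinal.sum_const' _ _
        _ ≤ κ * κ := by
            apply mul_le_mul'
            · exact mk_finset_le _ hκ hT
            · exact le_rfl
        _ = κ := Cardinal.mul_eq_self hκ
    -- surjection Ω → 𝔅
    have hsurj : ∃ φ : Ω → ↥𝔅, Function.Surjective φ := by
      refine ⟨fun ω => ⟨(↑(ω.1.map ⟨Subtype.val, Subtype.val_injective⟩) : Set S).pi
        (fun s => if h : ∃ hs : s ∈ T, ⟨s, hs⟩ ∈ ω.1
          then (ω.2 ⟨⟨s, h.choose⟩, h.choose_spec⟩).1 else Set.univ), ?_⟩, ?_⟩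
      · refine ⟨ω.1.map ⟨Subtype.val, Subtype.val_injective⟩, _, ?_, ?_, rfl⟩
        · intro s hs
          simp only [Finset.coe_map, Set.mem_image, Finset.mem_coe] at hs
          obtain ⟨x, -, rfl⟩ := hs
          exact x.2
        · intro s hs
          simp only [Finset.mem_map, Function.Embedding.coeFn_mk] at hs
          obtain ⟨x, hx, rfl⟩ := hs
          have hex : ∃ hs : x.1 ∈ T, ⟨x.1, hs⟩ ∈ ω.1 := ⟨x.2, by simpa using hx⟩
          rw [dif_pos hex]
          exact (ω.2 ⟨⟨x.1, hex.choose⟩, hex.choose_spec⟩).2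
      · rintro ⟨V, hV⟩
        obtain ⟨F, U, hFT, hU, rfl⟩ := hV
        refine ⟨⟨F.subtype (· ∈ T), fun i => ⟨U i.1.1, ?_⟩⟩, ?_⟩
        · have := i.2
          simp only [Finset.mem_subtype] at this
          exact hU _ this
        · apply Subtype.ext
          have hFeq : (F.subtype (· ∈ T)).map ⟨Subtype.val, Subtype.val_injective⟩ = F := by
            ext s
            simp only [Finset.mem_map, Finset.mem_subtype, Function.Embedding.coeFn_mk]
            constructor
            · rintro ⟨x, hx, rfl⟩; exact hx
            · intro hs; exact ⟨⟨s, hFT hs⟩, by simpa using hs, rfl⟩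
          show Set.pi _ _ = Set.pi _ _
          rw [hFeq]
          apply Set.pi_congr rfl
          intro s hs
          have hex : ∃ h : s ∈ T, ⟨s, h⟩ ∈ F.subtype (· ∈ T) := ⟨hFT hs, by
            simp only [Finset.mem_subtype]; exact hs⟩
          rw [dif_pos hex]
    exact hsurj.elim fun φ hφ => le_trans (Cardinal.mk_le_of_surjective hφ) hΩ
  exact tweight_le_of_basis 𝔅 hbasis hcard

end Weight
section Props

variable {S : Type u} {Is : S → Type u} [∀ s, PartialOrder (Is s)]
variable {Ds : ∀ s, InvSys (Is s)} {bot : ∀ s, Is s} {κ : Cardinal.{u}}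

theorem psys_t0 (hT0 : ∀ s (i : Is s), @T0Space ((Ds s).obj i) ((Ds s).topo i))
    (σ : PIdx (Is := Is) bot κ) :
    @T0Space ((PSys Ds bot κ).obj σ) ((PSys Ds bot κ).topo σ) := by
  letI := fun s => (Ds s).topo (σ.1 s)
  haveI := fun s => hT0 s (σ.1 s)
  exact inferInstanceAs (T0Space (∀ s, (Ds s).obj (σ.1 s)))

theorem psys_tweight (hκ : ℵ₀ ≤ κ) (hbot : ∀ s (i : Is s), bot s ≤ i)
    (hcomp : ∀ s, (Ds s).IsComplete κ)
    (hw : ∀ s (i : Is s), tweight ((Ds s).obj i) ((Ds s).topo i) ≤ κ)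
    (σ : PIdx (Is := Is) bot κ) :
    tweight ((PSys Ds bot κ).obj σ) ((PSys Ds bot κ).topo σ) ≤ κ := by
  refine tweight_pi_le hκ _ _ (supp bot σ.1) σ.2 ?_ (fun s => hw s (σ.1 s))
  intro s hs
  have hx : σ.1 s = bot s := not_not.1 hs
  rw [hx]
  exact (obj_subsingleton_of_bot (Ds s) (hcomp s) (hbot s)).1

theorem psys_skeletal (hbot : ∀ s (i : Is s), bot s ≤ i)
    (hcomp : ∀ s, (Ds s).IsComplete κ)
    (hsk : ∀ s (ρ σ : Is s) (h : ρ ≤ σ),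
      @Skeletal _ _ ((Ds s).topo σ) ((Ds s).topo ρ) ((Ds s).map h))
    (ρ σ : PIdx (Is := Is) bot κ) (h : ρ ≤ σ) :
    @Skeletal _ _ ((PSys Ds bot κ).topo σ) ((PSys Ds bot κ).topo ρ)
      ((PSys Ds bot κ).map h) := by
  letI := fun s => (Ds s).topo (σ.1 s)
  letI := fun s => (Ds s).topo (ρ.1 s)
  letI : TopologicalSpace ((PSys Ds bot κ).obj σ) := (PSys Ds bot κ).topo σ
  letI : TopologicalSpace ((PSys Ds bot κ).obj ρ) := (PSys Ds bot κ).topo ρ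
  have hneσ : ∀ s, Nonempty ((Ds s).obj (σ.1 s)) := fun s =>
    obj_nonempty (Ds s) (hcomp s) (hbot s) _
  have hneρ : ∀ s, Nonempty ((Ds s).obj (ρ.1 s)) := fun s =>
    obj_nonempty (Ds s) (hcomp s) (hbot s) _
  refine ⟨(PSys Ds bot κ).map_cont h, (PSys Ds bot κ).map_surj h, ?_⟩
  intro U hU hUne
  obtain ⟨x, hx⟩ := hUne
  obtain ⟨F, u, hu, hupi⟩ := isOpen_pi_iff.1 hU x hx
  set f : ∀ s, (Ds s).obj (σ.1 s) → (Ds s).obj (ρ.1 s) := fun s => (Ds s).map (h s) with hf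
  set W : Set ((PSys Ds bot κ).obj ρ) :=
    (↑F : Set S).pi (fun s => interior (closure (f s '' u s))) with hW
  have hWopen : IsOpen W := isOpen_set_pi F.finite_toSet fun s _ => isOpen_interior
  have hWne : W.Nonempty := by
    have hpt : ∀ s, ∃ p : (Ds s).obj (ρ.1 s),
        s ∈ F → p ∈ interior (closure (f s '' u s)) := by
      intro s
      by_cases hs : s ∈ F
      · obtain ⟨p, hp⟩ := (hsk s _ _ (h s)).2.2 (u s) (hu s hs).1 ⟨x s, (hu s hs).2⟩
        exact ⟨p, fun _ => hp⟩
      · exact ⟨(hneρ s).some, fun hc => absurd hc hs⟩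
    choose p hp using hpt
    exact ⟨p, fun s hs => hp s hs⟩
  have hWsub : W ⊆ closure ((PSys Ds bot κ).map h '' U) := by
    intro z hz
    rw [mem_closure_iff]
    intro O hO hzO
    obtain ⟨G, v, hv, hvpi⟩ := isOpen_pi_iff.1 hO z hzO
    have hchoice : ∀ s, ∃ wp : (Ds s).obj (σ.1 s),
        (s ∈ F → wp ∈ u s) ∧ (s ∈ G → f s wp ∈ v s) := by
      intro s
      by_cases hsG : s ∈ G
      · by_cases hsF : s ∈ F
        · have h1 : z s ∈ closure (f s '' u s) := interior_subset (hz s hsF)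
          rw [mem_closure_iff] at h1
          obtain ⟨y, hyv, hyim⟩ := h1 (v s) (hv s hsG).1 (hv s hsG).2
          obtain ⟨wp, hwpu, hwpy⟩ := hyim
          exact ⟨wp, fun _ => hwpu, fun _ => by rw [show f s wp = y from hwpy]; exact hyv⟩
        · obtain ⟨wp, hwp⟩ := (hsk s _ _ (h s)).2.1 (z s)
          exact ⟨wp, fun hc => absurd hc hsF, fun _ => by rw [show f s wp = z s from hwp]; exact (hv s hsG).2⟩
      · by_cases hsF : s ∈ F
        · exact ⟨x s, fun _ => (hu s hsF).2, fun hc => absurd hc hsG⟩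
        · exact ⟨(hneσ s).some, fun hc => absurd hc hsF, fun hc => absurd hc hsG⟩
    choose wp hw1 hw2 using hchoice
    refine ⟨(PSys Ds bot κ).map h wp, ?_, ?_⟩
    · exact hvpi (fun s hs => hw2 s hs)
    · exact ⟨wp, hupi (fun s hs => hw1 s hs), rfl⟩
  obtain ⟨p, hp⟩ := hWne
  exact ⟨p, interior_maximal hWsub hWopen hp⟩

end Props
section LimitEquiv

variable {S : Type u} {Is : S → Type u} [∀ s, PartialOrder (Is s)]
variable (Ds : ∀ s, InvSys (Is s)) (bot : ∀ s, Is s) (κ : Cardinal.{u})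

/-- embedding of a single coordinate into the product index, bottom elsewhere -/
noncomputable def iembed (s : S) (i : Is s) : ∀ s', Is s' := fun s' =>
  @dite _ (s' = s) (Classical.dec _) (fun h => cast (congrArg Is h.symm) i) (fun _ => bot s')

theorem iembed_self (s : S) (i : Is s) : iembed (Is := Is) bot s i s = i := by
  simp [iembed]

theorem iembed_apply_ne (s : S) (i : Is s) {s' : S} (h : s' ≠ s) :
    iembed (Is := Is) bot s i s' = bot s' := by
  simp [iembed, h]

theorem iembed_supp (hκ : ℵ₀ ≤ κ) (s : S) (i : Is s) :
    #↥(supp bot (iembed (Is := Is) bot s i)) ≤ κ := by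
  have hsub : supp bot (iembed (Is := Is) bot s i) ⊆ {s} := by
    intro s' hs'
    by_contra hne
    exact hs' (iembed_apply_ne bot s i (by simpa using hne))
  refine le_trans (Cardinal.mk_le_mk_of_subset hsub) ?_
  rw [Cardinal.mk_singleton]
  exact le_trans Cardinal.one_lt_aleph0.le hκ

noncomputable def pembed (hκ : ℵ₀ ≤ κ) (s : S) (i : Is s) : PIdx (Is := Is) bot κ :=
  ⟨iembed (Is := Is) bot s i, iembed_supp bot κ hκ s i⟩

theorem pembed_le (hκ : ℵ₀ ≤ κ) (hbot : ∀ s (i : Is s), bot s ≤ i) {s : S} {i : Is s}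
    {τ : PIdx (Is := Is) bot κ} (h : i ≤ τ.1 s) : pembed bot κ hκ s i ≤ τ := by
  intro s'
  show iembed (Is := Is) bot s i s' ≤ τ.1 s'
  by_cases hs : s' = s
  · subst hs
    rw [iembed_self]
    exact h
  · rw [iembed_apply_ne bot s i hs]
    exact hbot s' _

theorem pembed_mono (hκ : ℵ₀ ≤ κ) (hbot : ∀ s (i : Is s), bot s ≤ i) {s : S} {i j : Is s}
    (hij : i ≤ j) : pembed bot κ hκ s i ≤ pembed bot κ hκ s j := by
  refine pembed_le bot κ hκ hbot ?_
  show i ≤ iembed (Is := Is) bot s j s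
  rw [iembed_self]
  exact hij

noncomputable def limForward (hκ : ℵ₀ ≤ κ) (hbot : ∀ s (i : Is s), bot s ≤ i)
    (x : (PSys Ds bot κ).Limit) (s : S) : (Ds s).Limit := by
  refine ⟨fun i => (Ds s).map (iembed_self bot s i).ge (x.1 (pembed bot κ hκ s i) s), ?_⟩
  intro ρ σ' hij
  have hmono : pembed bot κ hκ s ρ ≤ pembed bot κ hκ s σ' := pembed_mono bot κ hκ hbot hij
  have hth : (Ds s).map (hmono s) (x.1 (pembed bot κ hκ s σ') s)
      = x.1 (pembed bot κ hκ s ρ) s := congrFun (x.2 _ _ hmono) s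
  calc (Ds s).map hij ((Ds s).map (iembed_self bot s σ').ge (x.1 (pembed bot κ hκ s σ') s))
      = (Ds s).map (hij.trans (iembed_self bot s σ').ge) (x.1 (pembed bot κ hκ s σ') s) :=
        (Ds s).map_comp _ _ _
    _ = (Ds s).map (iembed_self bot s ρ).ge
          ((Ds s).map (hmono s) (x.1 (pembed bot κ hκ s σ') s)) := ((Ds s).map_comp _ _ _).symm
    _ = (Ds s).map (iembed_self bot s ρ).ge (x.1 (pembed bot κ hκ s ρ) s) :=
        congrArg ((Ds s).map (iembed_self bot s ρ).ge) hth

noncomputable def limBackward (y : ∀ s, (Ds s).Limit) : (PSys Ds bot κ).Limit :=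
  ⟨fun σ => fun s => (y s).1 (σ.1 s), fun ρ σ' h => funext fun s => (y s).2 _ _ (h s)⟩

noncomputable def limHomeo (hκ : ℵ₀ ≤ κ) (hbot : ∀ s (i : Is s), bot s ≤ i) :
    (PSys Ds bot κ).Limit ≃ₜ ∀ s, (Ds s).Limit where
  toFun := limForward Ds bot κ hκ hbot
  invFun := limBackward Ds bot κ
  left_inv := by
    intro x
    apply Subtype.ext
    funext σ
    funext s
    show (Ds s).map (iembed_self bot s (σ.1 s)).ge (x.1 (pembed bot κ hκ s (σ.1 s)) s) = x.1 σ s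
    have hle : pembed bot κ hκ s (σ.1 s) ≤ σ := pembed_le bot κ hκ hbot (le_refl (σ.1 s))
    have hth : (Ds s).map (hle s) (x.1 σ s) = x.1 (pembed bot κ hκ s (σ.1 s)) s :=
      congrFun (x.2 _ _ hle) s
    calc (Ds s).map (iembed_self bot s (σ.1 s)).ge (x.1 (pembed bot κ hκ s (σ.1 s)) s)
        = (Ds s).map (iembed_self bot s (σ.1 s)).ge ((Ds s).map (hle s) (x.1 σ s)) :=
          (congrArg ((Ds s).map (iembed_self bot s (σ.1 s)).ge) hth).symm
      _ = (Ds s).map ((iembed_self bot s (σ.1 s)).ge.trans (hle s)) (x.1 σ s) :=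
          (Ds s).map_comp _ _ _
      _ = x.1 σ s := InvSys_map_self (Ds s) _ _
  right_inv := by
    intro y
    funext s
    apply Subtype.ext
    funext i
    exact (y s).2 _ _ _
  continuous_toFun := by
    apply continuous_pi
    intro s
    apply continuous_induced_rng.2
    letI := fun i : Is s => (Ds s).topo i
    apply continuous_pi
    intro i
    letI := fun σ : PIdx (Is := Is) bot κ => (PSys Ds bot κ).topo σ
    letI := fun s' => (Ds s').topo ((pembed bot κ hκ s i).1 s')
    have c1 : Continuous (Subtype.val :
        (PSys Ds bot κ).Limit → ∀ σ : PIdx (Is := Is) bot κ, (PSys Ds bot κ).obj σ) :=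
      continuous_subtype_val
    have c2 : Continuous fun p : (∀ σ : PIdx (Is := Is) bot κ, (PSys Ds bot κ).obj σ) =>
        p (pembed bot κ hκ s i) := continuous_apply _
    have c3 : Continuous fun q : (PSys Ds bot κ).obj (pembed bot κ hκ s i) => q s :=
      continuous_apply s
    have c4 : Continuous[(Ds s).topo (iembed (Is := Is) bot s i s), (Ds s).topo i]
        ((Ds s).map (iembed_self bot s i).ge) := (Ds s).map_cont _
    exact c4.comp (c3.comp (c2.comp c1))
  continuous_invFun := by
    apply continuous_induced_rng.2
    letI := fun σ : PIdx (Is := Is) bot κ => (PSys Ds bot κ).topo σ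
    apply continuous_pi
    intro σ
    letI := fun s => (Ds s).topo (σ.1 s)
    apply continuous_pi
    intro s
    letI := fun i : Is s => (Ds s).topo i
    exact ((continuous_apply (σ.1 s)).comp continuous_subtype_val).comp (continuous_apply s)

end LimitEquiv
end ClassCProd

/-- If every member of a family `{X_s : s ∈ S}` of topological spaces
belongs to the class `C_κ`, then so does the product `Π_{s∈S} X_s`. -/
theorem classC_product (κ : Cardinal.{u}) (hκ : ℵ₀ ≤ κ) (S : Type u) (X : S → Type u)
    [∀ s, TopologicalSpace (X s)] (hX : ∀ s, MemClassC (X s) κ) :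
    MemClassC (∀ s, X s) κ := by
  classical
  choose I PO hdir D hcompl hT0 hw hsk hhomeo using hX
  letI : ∀ s, PartialOrder (I s) := PO
  have hbots : ∀ s, ∃ b : I s, ∀ i, b ≤ i := by
    intro s
    obtain ⟨b, hb⟩ := (hcompl s).1 ∅ (fun x hx => absurd hx (Set.notMem_empty _)) (by simp)
    exact ⟨b, (ClassCProd.isLUB_empty_iff (I := I s)).1 hb⟩
  choose bot hbot using hbots
  refine ⟨ClassCProd.PIdx (Is := I) bot κ, inferInstance,
    ClassCProd.pidx_directed bot κ hκ hbot hdir, ClassCProd.PSys D bot κ, ?_, ?_, ?_, ?_, ?_⟩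
  · constructor
    · intro A hA hcard
      exact ⟨ClassCProd.chSup hκ hbot hcompl A hA hcard,
        ClassCProd.chSup_isLUB hκ hbot hcompl A hA hcard⟩
    · intro A hA hcard σ hσ
      exact ClassCProd.psys_complete_homeo hκ hbot hcompl hA hcard hσ
  · exact fun σ => ClassCProd.psys_t0 hT0 σ
  · exact fun σ => ClassCProd.psys_tweight hκ hbot hcompl hw σ
  · exact fun ρ σ h => ClassCProd.psys_skeletal hbot hcompl hsk ρ σ h
  · exact ⟨(Homeomorph.piCongrRight (fun s => (hhomeo s).some)).trans
      (ClassCProd.limHomeo D bot κ hκ hbot).symm⟩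
end

section
/- If {X_s : s ∈ S} is a family of ω-favorable (I-favorable) topological spaces, then the product Π_{s∈S} X_s is ω-favorable. -/
open Cardinal Set Topology TopologicalSpace

universe u

set_option linter.unusedSectionVars false
namespace OOGProd
noncomputable def natIio : ℕ ≃o (Set.Iio (Ordinal.omega0.{u})) :=
  StrictMono.orderIsoOfSurjective
    (fun n => ⟨(n : Ordinal.{u}), Ordinal.nat_lt_omega0 n⟩)
    (fun _ _ h => Subtype.mk_lt_mk.mpr (Nat.cast_lt.mpr h))
    (fun b => by
      obtain ⟨n, hn⟩ := Ordinal.lt_omega0.mp b.2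
      exact ⟨n, by simp [← hn]⟩)
noncomputable def natToType : ℕ ≃o (Cardinal.aleph0.{u}).ord.ToType := by
  rw [Cardinal.ord_aleph0]
  exact natIio.trans Ordinal.ToType.mk
section OneSpace
variable {Y : Type u} [TopologicalSpace Y]
noncomputable def app (σ : GameStrategy Y ℵ₀) (k : ℕ) (f : ℕ → Set Y) : Set Y :=
  σ (natToType k) fun j => f (natToType.symm j.1)
theorem app_congr (σ : GameStrategy Y ℵ₀) (k : ℕ) {f g : ℕ → Set Y}
    (h : ∀ m < k, f m = g m) : app σ k f = app σ k g := by
  refine congrArg (σ (natToType k)) (funext fun j => h _ ?_)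
  have := natToType.symm.lt_iff_lt.mpr j.2
  simpa using this
theorem app_open {σ : GameStrategy Y ℵ₀} (hσ : IsWinningStrategy Y ℵ₀ σ) (k : ℕ)
    {f : ℕ → Set Y} (hf : ∀ m, IsOpen (f m) ∧ (f m).Nonempty) :
    IsOpen (app σ k f) ∧ (app σ k f).Nonempty :=
  hσ.1 _ _ fun _ => hf _
theorem win_nat {σ : GameStrategy Y ℵ₀} (hσ : IsWinningStrategy Y ℵ₀ σ)
    {f : ℕ → Set Y} (hf : ∀ k, (IsOpen (f k) ∧ (f k).Nonempty) ∧ f k ⊆ app σ k f) :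
    Dense (⋃ k, f k) := by
  have hD := hσ.2 (fun i => f (natToType.symm i)) ?_
  · rwa [natToType.symm.surjective.iUnion_comp] at hD
  · intro i
    obtain ⟨k, rfl⟩ : ∃ k, natToType k = i := ⟨natToType.symm i, natToType.apply_symm_apply i⟩
    refine ⟨by simpa using (hf k).1, ?_⟩
    simpa [app, natToType.symm_apply_apply] using (hf k).2
end OneSpace

/-! ### Machinery for the product strategy -/

variable {S : Type u} {X : S → Type u} [∀ s, TopologicalSpace (X s)] [∀ s, Nonempty (X s)]

theorem box_exists {C : Set (∀ s, X s)} (hC : IsOpen C) (hne : C.Nonempty) :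
    ∃ d : ∀ s, Set (X s), (∀ s, IsOpen (d s) ∧ (d s).Nonempty) ∧
      {s | d s ≠ Set.univ}.Finite ∧ Set.univ.pi d ⊆ C := by
  classical
  obtain ⟨f, hf⟩ := hne
  obtain ⟨I, v, hv, hsub⟩ := isOpen_pi_iff.mp hC f hf
  refine ⟨fun s => if s ∈ I then v s else univ, fun s => ?_, ?_, ?_⟩
  · by_cases hs : s ∈ I
    · simpa [hs] using ⟨(hv s hs).1, ⟨f s, (hv s hs).2⟩⟩
    · simp [hs]
  · exact I.finite_toSet.subset (fun s hs => by by_cases h : s ∈ I <;> simp_all)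
  · intro x hx
    refine hsub ?_
    intro s hs
    have hs' : s ∈ I := hs
    have := hx s (mem_univ s)
    simpa [hs'] using this

open Classical in
noncomputable def dbox (C : Set (∀ s, X s)) : ∀ s, Set (X s) :=
  if h : ∃ d : ∀ s, Set (X s), (∀ s, IsOpen (d s) ∧ (d s).Nonempty) ∧
      {s | d s ≠ Set.univ}.Finite ∧ Set.univ.pi d ⊆ C
  then h.choose else fun _ => Set.univ

open Classical in
theorem dbox_open (C : Set (∀ s, X s)) (s : S) :
    IsOpen (dbox C s) ∧ (dbox C s).Nonempty := by
  unfold dbox; split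
  · next h => exact h.choose_spec.1 s
  · exact ⟨isOpen_univ, univ_nonempty⟩

open Classical in
theorem dbox_finite (C : Set (∀ s, X s)) : {s | dbox C s ≠ Set.univ}.Finite := by
  unfold dbox; split
  · next h => exact h.choose_spec.2.1
  · simpa using Set.finite_empty

open Classical in
theorem dbox_subset {C : Set (∀ s, X s)} (hC : IsOpen C) (hne : C.Nonempty) :
    Set.univ.pi (dbox C) ⊆ C := by
  unfold dbox; rw [dif_pos (box_exists hC hne)]
  exact (Exists.choose_spec (box_exists hC hne)).2.2

theorem dbox_pi_nonempty (C : Set (∀ s, X s)) : (Set.univ.pi (dbox C)).Nonempty :=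
  univ_pi_nonempty_iff.mpr fun s => (dbox_open C s).2

variable (X) in
noncomputable def dd (hist : ℕ → Set (∀ s, X s)) (m : ℕ) : ∀ s, Set (X s) := dbox (hist m)

variable (X) in
noncomputable def suppF (hist : ℕ → Set (∀ s, X s)) (m : ℕ) : Finset S :=
  (dbox_finite (hist m)).toFinset

variable (X) in
noncomputable def coordAt (hist : ℕ → Set (∀ s, X s)) (q : ℕ × ℕ) : Option S :=
  (suppF X hist q.1).toList[q.2]?

variable (X) in
noncomputable def posMoves (hist : ℕ → Set (∀ s, X s)) (l : List ℕ) (t : S) (i : ℕ) :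
    Set (X t) := dd X hist (l.getD i 0) t

variable (X) in
noncomputable def entrySet (σ : ∀ s, GameStrategy (X s) ℵ₀) (hist : ℕ → Set (∀ s, X s))
    (p : (ℕ × ℕ) × List ℕ) : Set (∀ s, X s) :=
  (coordAt X hist p.1).elim univ fun t =>
    (fun x => x t) ⁻¹' app (σ t) p.2.length (posMoves X hist p.2 t)

variable (X) in
def ValidAt (hist : ℕ → Set (∀ s, X s)) (c : List ((ℕ × ℕ) × List ℕ)) : Prop :=
  ∀ p ∈ c, ∀ q ∈ c, coordAt X hist p.1 = coordAt X hist q.1 →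
    (coordAt X hist p.1).isSome → p.2 = q.2

noncomputable def nodeOf (n : ℕ) : List ((ℕ × ℕ) × List ℕ) :=
  (Encodable.decode n.unpair.1).getD []

theorem nodeOf_spec (c : List ((ℕ × ℕ) × List ℕ)) (N : ℕ) :
    ∃ n, N < n ∧ nodeOf n = c := by
  refine ⟨Nat.pair (Encodable.encode c) (N + 1), ?_, ?_⟩
  · exact lt_of_lt_of_le (Nat.lt_succ_self N) (Nat.right_le_pair _ _)
  · simp [nodeOf, Nat.unpair_pair, Encodable.encodek]

variable (X) in
open Classical in
noncomputable def core (σ : ∀ s, GameStrategy (X s) ℵ₀) (hist : ℕ → Set (∀ s, X s))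
    (n : ℕ) : Set (∀ s, X s) :=
  if ValidAt X hist (nodeOf n) then ⋂ p ∈ nodeOf n, entrySet X σ hist p else univ

variable (X) in
def trunc (hist : ℕ → Set (∀ s, X s)) (n m : ℕ) : Set (∀ s, X s) :=
  if m < n then hist m else ∅

variable (X) in
noncomputable def IMove (σ : ∀ s, GameStrategy (X s) ℵ₀) (hist : ℕ → Set (∀ s, X s))
    (n : ℕ) : Set (∀ s, X s) := core X σ (trunc X hist n) n

variable (X) in
noncomputable def prodStrategy (σ : ∀ s, GameStrategy (X s) ℵ₀) :
    GameStrategy (∀ s, X s) ℵ₀ :=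
  fun i f => IMove X σ (fun m => if h : natToType m < i then f ⟨natToType m, h⟩ else ∅)
    (natToType.symm i)


theorem trunc_eq (hist : ℕ → Set (∀ s, X s)) {n m : ℕ} (h : m < n) :
    trunc X hist n m = hist m := if_pos h

theorem suppF_congr {h1 h2 : ℕ → Set (∀ s, X s)} (m : ℕ) (h : h1 m = h2 m) :
    suppF X h1 m = suppF X h2 m :=
  Finset.ext fun a => by simp [suppF, Set.Finite.mem_toFinset, dd, h]

theorem coordAt_congr {h1 h2 : ℕ → Set (∀ s, X s)} (q : ℕ × ℕ) (h : h1 q.1 = h2 q.1) :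
    coordAt X h1 q = coordAt X h2 q := by
  unfold coordAt; rw [suppF_congr q.1 h]

theorem entrySet_congr (σ : ∀ s, GameStrategy (X s) ℵ₀) {h1 h2 : ℕ → Set (∀ s, X s)}
    (p : (ℕ × ℕ) × List ℕ) (hm : h1 p.1.1 = h2 p.1.1) (hl : ∀ j ∈ p.2, h1 j = h2 j) :
    entrySet X σ h1 p = entrySet X σ h2 p := by
  unfold entrySet
  rw [coordAt_congr p.1 hm]
  cases hc : coordAt X h2 p.1 with
  | none => rfl
  | some t =>
    simp only [Option.elim]
    refine congrArg (fun W => (fun x : ∀ s, X s => x t) ⁻¹' W)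
      (app_congr _ _ fun i hi => ?_)
    unfold posMoves dd
    rw [hl _ (by rw [List.getD_eq_getElem _ _ hi]; simp)]

theorem posMoves_open (hist : ℕ → Set (∀ s, X s)) (l : List ℕ) (t : S) (i : ℕ) :
    IsOpen (posMoves X hist l t i) ∧ (posMoves X hist l t i).Nonempty :=
  dbox_open _ t

theorem entrySet_open {σ : ∀ s, GameStrategy (X s) ℵ₀}
    (hσ : ∀ s, IsWinningStrategy (X s) ℵ₀ (σ s)) (hist : ℕ → Set (∀ s, X s))
    (p : (ℕ × ℕ) × List ℕ) : IsOpen (entrySet X σ hist p) := by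
  unfold entrySet
  cases hc : coordAt X hist p.1 with
  | none => exact isOpen_univ
  | some t =>
    exact (app_open (hσ t) _ (posMoves_open hist p.2 t)).1.preimage (continuous_apply t)

open Classical in
theorem core_open_nonempty {σ : ∀ s, GameStrategy (X s) ℵ₀}
    (hσ : ∀ s, IsWinningStrategy (X s) ℵ₀ (σ s)) (hist : ℕ → Set (∀ s, X s)) (n : ℕ) :
    IsOpen (core X σ hist n) ∧ (core X σ hist n).Nonempty := by
  classical
  unfold core; split
  · next hv =>
    constructor
    · exact Set.Finite.isOpen_biInter (List.finite_toSet _)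
        (fun p _ => entrySet_open hσ hist p)
    · have key : ∀ t : S, ∃ W : Set (X t), W.Nonempty ∧ ∀ p ∈ nodeOf n,
          coordAt X hist p.1 = some t → W ⊆ app (σ t) p.2.length (posMoves X hist p.2 t) := by
        intro t
        by_cases h : ∃ p, p ∈ nodeOf n ∧ coordAt X hist p.1 = some t
        · obtain ⟨p₀, hp₀, hc₀⟩ := h
          refine ⟨app (σ t) p₀.2.length (posMoves X hist p₀.2 t),
            (app_open (hσ t) _ (posMoves_open hist p₀.2 t)).2, ?_⟩
          intro p hp hcp
          have h2 : p.2 = p₀.2 := hv p hp p₀ hp₀ (hcp.trans hc₀.symm) (by simp [hcp])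
          rw [h2]
        · exact ⟨univ, univ_nonempty, fun p hp hcp => absurd ⟨p, hp, hcp⟩ h⟩
      choose g hg1 hg2 using key
      obtain ⟨x, hx⟩ : (Set.univ.pi g).Nonempty := univ_pi_nonempty_iff.mpr hg1
      refine ⟨x, mem_iInter₂.mpr fun p hp => ?_⟩
      unfold entrySet
      cases hc : coordAt X hist p.1 with
      | none => exact mem_univ x
      | some t =>
        simp only [Option.elim]
        exact hg2 t p hp hc (hx t (mem_univ t))
  · exact ⟨isOpen_univ, univ_nonempty⟩

theorem IMove_congr (σ : ∀ s, GameStrategy (X s) ℵ₀) {h1 h2 : ℕ → Set (∀ s, X s)} (n : ℕ)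
    (h : ∀ m < n, h1 m = h2 m) : IMove X σ h1 n = IMove X σ h2 n := by
  unfold IMove
  have : trunc X h1 n = trunc X h2 n := by
    funext m
    unfold trunc
    split
    · exact h m ‹_›
    · rfl
  rw [this]

theorem prodStrategy_open_nonempty {σ : ∀ s, GameStrategy (X s) ℵ₀}
    (hσ : ∀ s, IsWinningStrategy (X s) ℵ₀ (σ s))
    (i : (Cardinal.aleph0.{u}).ord.ToType)
    (f : {j // j < i} → Set (∀ s, X s)) :
    IsOpen (prodStrategy X σ i f) ∧ (prodStrategy X σ i f).Nonempty :=
  core_open_nonempty hσ _ _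


theorem nat_rec_exists {α : Sort*} (a : α) (f : ℕ → α → α) :
    ∃ g : ℕ → α, g 0 = a ∧ ∀ k, g (k + 1) = f k (g k) :=
  ⟨fun k => Nat.rec a f k, rfl, fun _ => rfl⟩

theorem exists_least {p : ℕ → Prop} (h : ∃ n, p n) : ∃ n, p n ∧ ∀ m < n, ¬p m := by
  classical
  exact ⟨Nat.find h, Nat.find_spec h, fun m hm => Nat.find_min h hm⟩

theorem nat_list_bound (l : List ℕ) : ∃ M, ∀ j ∈ l, j < M := by
  induction l with
  | nil => exact ⟨0, by simp⟩
  | cons x xs ih =>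
    obtain ⟨M, hM⟩ := ih
    refine ⟨max (x + 1) M, fun j hj => ?_⟩
    rcases List.mem_cons.mp hj with h | h
    · subst h; exact lt_of_lt_of_le (Nat.lt_succ_self j) (le_max_left _ _)
    · exact lt_of_lt_of_le (hM j h) (le_max_right _ _)

theorem pair_list_bound (cc : S → ℕ × ℕ) (a : List (S × List ℕ)) :
    ∃ M, ∀ q ∈ a, (cc q.1).1 < M ∧ ∀ j ∈ q.2, j < M := by
  induction a with
  | nil => exact ⟨0, by simp⟩
  | cons q a ih =>
    obtain ⟨M, hM⟩ := ih
    obtain ⟨M2, hM2⟩ := nat_list_bound q.2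
    refine ⟨max M (max ((cc q.1).1 + 1) M2), fun r hr => ?_⟩
    rcases List.mem_cons.mp hr with h | h
    · subst h
      exact ⟨lt_of_lt_of_le (lt_of_lt_of_le (Nat.lt_succ_self _)
          (le_trans (le_max_left _ _) (le_max_right _ _))) le_rfl,
        fun j hj => lt_of_lt_of_le (hM2 j hj)
          (le_trans (le_max_right _ _) (le_max_right _ _))⟩
    · exact ⟨lt_of_lt_of_le (hM r h).1 (le_max_left _ _),
        fun j hj => lt_of_lt_of_le ((hM r h).2 j hj) (le_max_left _ _)⟩

open Classical in
theorem exec_step {σ : ∀ s, GameStrategy (X s) ℵ₀}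
    (hσ : ∀ s, IsWinningStrategy (X s) ℵ₀ (σ s)) {hist : ℕ → Set (∀ s, X s)}
    (hrun : ∀ k, (IsOpen (hist k) ∧ (hist k).Nonempty) ∧ hist k ⊆ IMove X σ hist k)
    (cc : S → ℕ × ℕ) (a : List (S × List ℕ))
    (hcc : ∀ q ∈ a, coordAt X hist (cc q.1) = some q.1)
    (hnd : (a.map Prod.fst).Nodup) (N : ℕ) :
    ∃ n, N < n ∧ ∀ q ∈ a,
      dd X hist n q.1 ⊆ app (σ q.1) q.2.length (posMoves X hist q.2 q.1) := by
  classical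
  obtain ⟨M, hM⟩ := pair_list_bound cc a
  set c := a.map (fun q => (cc q.1, q.2)) with hc
  obtain ⟨n, hn, hnode⟩ := nodeOf_spec c (max N M)
  have hrefs : ∀ q ∈ a, (cc q.1).1 < n ∧ ∀ j ∈ q.2, j < n := by
    intro q hq
    refine ⟨lt_trans (lt_of_lt_of_le (hM q hq).1 (le_max_right _ _)) hn,
      fun j hj => lt_trans (lt_of_lt_of_le ((hM q hq).2 j hj) (le_max_right _ _)) hn⟩
  have hcoordT : ∀ q ∈ a, coordAt X (trunc X hist n) (cc q.1) = some q.1 := by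
    intro q hq
    rw [coordAt_congr (cc q.1) (trunc_eq hist (hrefs q hq).1)]
    exact hcc q hq
  have hvalid : ValidAt X (trunc X hist n) c := by
    intro p hp r hr heq _
    obtain ⟨q1, hq1, rfl⟩ := List.mem_map.mp hp
    obtain ⟨q2, hq2, rfl⟩ := List.mem_map.mp hr
    have e1 := hcoordT q1 hq1
    have e2 := hcoordT q2 hq2
    simp only at heq
    rw [e1, e2] at heq
    have : q1.1 = q2.1 := Option.some_injective _ heq
    have : q1 = q2 := List.inj_on_of_nodup_map hnd hq1 hq2 this
    rw [this]
  have hsub : hist n ⊆ ⋂ p ∈ c, entrySet X σ (trunc X hist n) p := by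
    have h0 := (hrun n).2
    unfold IMove core at h0
    rw [hnode, if_pos hvalid] at h0
    exact h0
  refine ⟨n, lt_of_le_of_lt (le_max_left _ _) hn, fun q hq => ?_⟩
  have hp : (cc q.1, q.2) ∈ c := List.mem_map.mpr ⟨q, hq, rfl⟩
  have h1 : hist n ⊆ entrySet X σ (trunc X hist n) (cc q.1, q.2) :=
    fun x hx => mem_iInter₂.mp (hsub hx) _ hp
  rw [entrySet_congr σ _ (trunc_eq hist (hrefs q hq).1)
    (fun j hj => trunc_eq hist ((hrefs q hq).2 j hj))] at h1
  unfold entrySet at h1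
  rw [show coordAt X hist (cc q.1, q.2).1 = some q.1 from hcc q hq] at h1
  simp only [Option.elim] at h1
  have hbox : Set.univ.pi (dd X hist n) ⊆ hist n := dbox_subset (hrun n).1.1 (hrun n).1.2
  intro y hy
  obtain ⟨z, hz⟩ := dbox_pi_nonempty (hist n)
  have hx : Function.update z q.1 y ∈ Set.univ.pi (dd X hist n) := by
    intro s _
    by_cases hs : s = q.1
    · subst hs; simpa [Function.update_self] using hy
    · rw [Function.update_of_ne hs]; exact hz s (mem_univ s)
  have := h1 (hbox hx)
  simpa [Function.update_self] using this


open Classical in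
theorem subclaim {σ : ∀ s, GameStrategy (X s) ℵ₀}
    (hσ : ∀ s, IsWinningStrategy (X s) ℵ₀ (σ s)) {hist : ℕ → Set (∀ s, X s)}
    (hrun : ∀ k, (IsOpen (hist k) ∧ (hist k).Nonempty) ∧ hist k ⊆ IMove X σ hist k)
    (cc : S → ℕ × ℕ) (t₁ : S) (hct1 : coordAt X hist (cc t₁) = some t₁)
    {V : Set (X t₁)} (hV : IsOpen V) (hVne : V.Nonempty)
    (a : List (S × List ℕ))
    (hcc : ∀ q ∈ a, coordAt X hist (cc q.1) = some q.1)
    (hnd : (a.map Prod.fst).Nodup)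
    (ht1 : t₁ ∉ a.map Prod.fst) :
    ∃ n, (dd X hist n t₁ ∩ V).Nonempty ∧ ∀ q ∈ a,
      dd X hist n q.1 ⊆ app (σ q.1) q.2.length (posMoves X hist q.2 q.1) := by
  classical
  have hex : ∀ l : List ℕ, ∃ n, 0 < n ∧ ∀ q ∈ ((t₁, l) :: a),
      dd X hist n q.1 ⊆ app (σ q.1) q.2.length (posMoves X hist q.2 q.1) := by
    intro l
    refine exec_step hσ hrun cc ((t₁, l) :: a) ?_ ?_ 0
    · intro q hq
      rcases List.mem_cons.mp hq with h | h
      · subst h; exact hct1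
      · exact hcc q h
    · rw [List.map_cons]
      exact List.nodup_cons.mpr ⟨ht1, hnd⟩
  choose nf hnf0 hnf using hex
  let pos : ℕ → List ℕ := fun k => Nat.rec [] (fun _ pk => pk ++ [nf pk]) k
  have hstep : ∀ k, pos (k + 1) = pos k ++ [nf (pos k)] := fun k => rfl
  have hlen : ∀ k, (pos k).length = k := by
    intro k
    induction k with
    | zero => rfl
    | succ k ih => rw [hstep, List.length_append, ih]; rfl
  have hgetD : ∀ k i, i < k → (pos k).getD i 0 = nf (pos i) := by
    intro k
    induction k with
    | zero => omega
    | succ k ih =>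
      intro i hi
      rcases Nat.lt_succ_iff_lt_or_eq.mp hi with h | h
      · rw [hstep, List.getD_append _ _ _ _ (by rw [hlen]; exact h)]
        exact ih i h
      · subst h
        rw [hstep, List.getD_append_right _ _ _ _ (hlen i).le]
        simp [hlen]
  set M : ℕ → Set (X t₁) := fun k => dd X hist (nf (pos k)) t₁ with hM
  have hrunM : ∀ k, (IsOpen (M k) ∧ (M k).Nonempty) ∧ M k ⊆ app (σ t₁) k M := by
    intro k
    refine ⟨dbox_open _ t₁, ?_⟩
    have h1 := hnf (pos k) (t₁, pos k) List.mem_cons_self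
    simp only at h1
    rw [hlen k] at h1
    have h2 : app (σ t₁) k (posMoves X hist (pos k) t₁) = app (σ t₁) k M := by
      refine app_congr _ _ fun i hi => ?_
      unfold posMoves
      rw [hgetD k i hi]
    rw [h2] at h1
    exact h1
  have hdense := win_nat (hσ t₁) hrunM
  obtain ⟨x, hxV, hxU⟩ := hdense.inter_open_nonempty V hV hVne
  obtain ⟨k, hk⟩ := mem_iUnion.mp hxU
  refine ⟨nf (pos k), ⟨x, hk, hxV⟩, ?_⟩
  intro q hq
  exact hnf (pos k) q (List.mem_cons_of_mem _ hq)


open Classical in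
theorem joint_hit {σ : ∀ s, GameStrategy (X s) ℵ₀}
    (hσ : ∀ s, IsWinningStrategy (X s) ℵ₀ (σ s)) {hist : ℕ → Set (∀ s, X s)}
    (hrun : ∀ k, (IsOpen (hist k) ∧ (hist k).Nonempty) ∧ hist k ⊆ IMove X σ hist k)
    (cc : S → ℕ × ℕ) (F' : Finset S)
    (hccF : ∀ t ∈ F', coordAt X hist (cc t) = some t)
    (V : ∀ t, Set (X t)) (hVo : ∀ t ∈ F', IsOpen (V t))
    (hVne : ∀ t ∈ F', (V t).Nonempty) :
    ∃ n, ∀ t ∈ F', (dd X hist n t ∩ V t).Nonempty := by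
  classical
  haveI instDP : ∀ p : ℕ → Prop, DecidablePred p := fun _ _ => Classical.propDecidable _
  by_contra hcon
  push_neg at hcon
  have hF'ne : F'.Nonempty := by
    obtain ⟨t, ht, _⟩ := hcon 0
    exact ⟨t, ht⟩
  obtain ⟨t₁, ht₁F⟩ := hF'ne
  set mk : (S → List ℕ) → List (S × List ℕ) :=
    fun g => (F'.erase t₁).toList.map (fun t => (t, g t)) with hmkdef
  have hmem_mk : ∀ g t, t ∈ F'.erase t₁ → (t, g t) ∈ mk g := by
    intro g t ht
    exact List.mem_map.mpr ⟨t, Finset.mem_toList.mpr ht, rfl⟩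
  have hmkcc : ∀ g, ∀ q ∈ mk g, coordAt X hist (cc q.1) = some q.1 := by
    intro g q hq
    obtain ⟨t, ht, rfl⟩ := List.mem_map.mp hq
    exact hccF t (Finset.mem_of_mem_erase (Finset.mem_toList.mp ht))
  have hmkfst : ∀ g, (mk g).map Prod.fst = (F'.erase t₁).toList := by
    intro g
    have hid : (Prod.fst ∘ fun t : S => (t, g t)) = id := rfl
    rw [hmkdef, List.map_map, hid, List.map_id]
  have hmknd : ∀ g, ((mk g).map Prod.fst).Nodup := by
    intro g; rw [hmkfst]; exact Finset.nodup_toList _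
  have hmkt1 : ∀ g, t₁ ∉ (mk g).map Prod.fst := by
    intro g; rw [hmkfst]
    intro h
    exact Finset.notMem_erase t₁ F' (Finset.mem_toList.mp h)
  have key : ∀ g : S → List ℕ, ∃ (n : ℕ) (t : S), t ∈ F'.erase t₁ ∧
      (dd X hist n t ∩ V t) = ∅ ∧
      dd X hist n t ⊆ app (σ t) (g t).length (posMoves X hist (g t) t) := by
    intro g
    obtain ⟨n, hhit, hexec⟩ := subclaim hσ hrun cc t₁ (hccF t₁ ht₁F)
      (hVo t₁ ht₁F) (hVne t₁ ht₁F) (mk g) (hmkcc g) (hmknd g) (hmkt1 g)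
    obtain ⟨t, htF, htmiss⟩ := hcon n
    have hne : t ≠ t₁ := by
      rintro rfl
      rw [htmiss] at hhit
      exact Set.not_nonempty_empty hhit
    refine ⟨n, t, Finset.mem_erase.mpr ⟨hne, htF⟩, htmiss, ?_⟩
    exact hexec (t, g t) (hmem_mk g t (Finset.mem_erase.mpr ⟨hne, htF⟩))
  choose nf tf htf hmiss hext using key
  let g : ℕ → S → List ℕ := fun j => Nat.rec (fun _ => [])
    (fun _ gj => Function.update gj (tf gj) (gj (tf gj) ++ [nf gj])) j
  have hgstep : ∀ j, g (j + 1) =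
      Function.update (g j) (tf (g j)) (g j (tf (g j)) ++ [nf (g j)]) := fun _ => rfl
  set T : ℕ → S := fun j => tf (g j) with hTdef
  have hTmem : ∀ j, T j ∈ F'.erase t₁ := fun j => htf (g j)
  obtain ⟨tstar, hfib⟩ := Finite.exists_infinite_fiber
    (fun j => (⟨T j, hTmem j⟩ : {t // t ∈ F'.erase t₁}))
  set ts := tstar.1 with htsdef
  have htsmem : ts ∈ F'.erase t₁ := tstar.2
  have hfib' : {j | T j = ts}.Infinite := by
    have h1 := Set.infinite_coe_iff.mp hfib
    refine h1.mono ?_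
    intro j hj
    have : (⟨T j, hTmem j⟩ : {t // t ∈ F'.erase t₁}) = tstar := hj
    simpa [htsdef] using congrArg Subtype.val this
  have ex0 : ∃ j, T j = ts := by
    obtain ⟨j, hj⟩ := hfib'.nonempty
    exact ⟨j, hj⟩
  have exgt : ∀ N : ℕ, ∃ j, N < j ∧ T j = ts := by
    intro N
    obtain ⟨b, hb, hNb⟩ := hfib'.exists_gt N
    exact ⟨b, hNb, hb⟩
  obtain ⟨j0, hj01, hj02⟩ := exists_least ex0
  have hleast : ∀ N : ℕ, ∃ j, (N < j ∧ T j = ts) ∧ ∀ m < j, ¬(N < m ∧ T m = ts) :=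
    fun N => exists_least (exgt N)
  choose nxt hnxt1 hnxt2 using hleast
  obtain ⟨js, hjseq0, hjseqS⟩ := nat_rec_exists j0 (fun _ jk => nxt jk)
  have hjs0min : ∀ j < js 0, T j ≠ ts := by
    intro j hj
    rw [hjseq0] at hj
    exact hj02 j hj
  have hjsmem : ∀ k, T (js k) = ts := by
    intro k
    cases k with
    | zero => rw [hjseq0]; exact hj01
    | succ k =>
      rw [hjseqS]
      exact (hnxt1 (js k)).2
  have hjslt : ∀ k, js k < js (k + 1) := by
    intro k
    rw [hjseqS]
    exact (hnxt1 (js k)).1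
  have hjsSmin : ∀ k j, j < js (k + 1) → ¬(js k < j ∧ T j = ts) := by
    intro k j hj
    rw [hjseqS] at hj
    exact hnxt2 (js k) j hj
  have hnochange : ∀ j, T j ≠ ts → g (j + 1) ts = g j ts := by
    intro j h
    rw [hgstep]
    exact Function.update_of_ne (Ne.symm h) _ _
  have hchange : ∀ j, T j = ts → g (j + 1) ts = g j ts ++ [nf (g j)] := by
    intro j h
    rw [hgstep, show tf (g j) = ts from h, Function.update_self]
  have hconst : ∀ j1 j2, j1 ≤ j2 → (∀ j, j1 ≤ j → j < j2 → T j ≠ ts) →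
      g j2 ts = g j1 ts := by
    intro j1 j2 h
    induction j2, h using Nat.le_induction with
    | base => intro _; rfl
    | succ j2 hj2 ih =>
      intro hno
      rw [hnochange j2 (hno j2 hj2 (Nat.lt_succ_self _)),
        ih (fun j hj1 hj2' => hno j hj1 (Nat.lt_succ_of_lt hj2'))]
  have hgl : ∀ k, g (js k) ts = (List.range k).map (fun i => nf (g (js i))) := by
    intro k
    induction k with
    | zero =>
      have h0 : g (js 0) ts = g 0 ts :=
        hconst 0 (js 0) (Nat.zero_le _) (fun j _ hj => hjs0min j hj)
      rw [h0]; rfl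
    | succ k ih =>
      have h1 : g (js (k + 1)) ts = g (js k + 1) ts := by
        refine hconst (js k + 1) (js (k + 1)) (hjslt k) ?_
        intro j hj1 hj2 hT
        exact hjsSmin k j hj2 ⟨hj1, hT⟩
      rw [h1, hchange (js k) (hjsmem k), ih, List.range_succ]
      simp
  set M : ℕ → Set (X ts) := fun k => dd X hist (nf (g (js k))) ts with hMdef
  have hlen2 : ∀ k, (g (js k) ts).length = k := by
    intro k; rw [hgl k]; simp
  have hgetD2 : ∀ k i, i < k → (g (js k) ts).getD i 0 = nf (g (js i)) := by
    intro k i hi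
    rw [hgl k]
    rw [List.getD_eq_getElem _ _ (by simpa using hi)]
    simp
  have hrunM : ∀ k, (IsOpen (M k) ∧ (M k).Nonempty) ∧ M k ⊆ app (σ ts) k M := by
    intro k
    refine ⟨dbox_open _ ts, ?_⟩
    have e : tf (g (js k)) = ts := hjsmem k
    have h1 := hext (g (js k))
    rw [show tf (g (js k)) = ts from e] at h1
    rw [hlen2 k] at h1
    have h2 : app (σ ts) k (posMoves X hist (g (js k) ts) ts) = app (σ ts) k M := by
      refine app_congr _ _ fun i hi => ?_
      unfold posMoves
      rw [hgetD2 k i hi]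
    rw [h2] at h1
    exact h1
  have hdense := win_nat (hσ ts) hrunM
  obtain ⟨x, hxV, hxU⟩ := hdense.inter_open_nonempty (V ts)
    (hVo ts (Finset.mem_of_mem_erase htsmem))
    (hVne ts (Finset.mem_of_mem_erase htsmem))
  obtain ⟨k, hk⟩ := mem_iUnion.mp hxU
  have hm := hmiss (g (js k))
  rw [show tf (g (js k)) = ts from hjsmem k] at hm
  have : x ∈ dd X hist (nf (g (js k))) ts ∩ V ts := ⟨hk, hxV⟩
  rw [hm] at this
  exact this

end OOGProd

open OOGProd in
/-- The product of a family of `ω`-favorable (I-favorable) spaces is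
`ω`-favorable. -/
theorem product_omega_favorable (S : Type u) (X : S → Type u)
    [∀ s, TopologicalSpace (X s)] (hX : ∀ s, IsFavorable (X s) ℵ₀) :
    IsFavorable (∀ s, X s) ℵ₀ := by
  classical
  choose σ hσ using hX
  haveI hne : ∀ s, Nonempty (X s) := by
    intro s
    have h1 := (hσ s).1 (natToType 0) (fun _ => ∅) ?_
    · obtain ⟨x, _⟩ := h1.2
      exact ⟨x⟩
    · intro j
      exfalso
      obtain ⟨m, hm⟩ : ∃ m, natToType m = j.1 :=
        ⟨natToType.symm _, natToType.apply_symm_apply _⟩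
      have hj := j.2
      rw [← hm] at hj
      exact Nat.not_lt_zero m (natToType.lt_iff_lt.mp hj)
  refine ⟨prodStrategy X σ, ?_, ?_⟩
  · intro i f _
    exact prodStrategy_open_nonempty hσ i f
  · intro B hB
    set h : ℕ → Set (∀ s, X s) := fun k => B (natToType k) with hh
    have hrun : ∀ k, (IsOpen (h k) ∧ (h k).Nonempty) ∧ h k ⊆ IMove X σ h k := by
      intro k
      refine ⟨(hB (natToType k)).1, ?_⟩
      refine (hB (natToType k)).2.trans (Eq.subset ?_)
      show prodStrategy X σ (natToType k) (fun j => B j.1) = IMove X σ h k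
      unfold prodStrategy
      rw [natToType.symm_apply_apply]
      refine IMove_congr σ k fun m hm => ?_
      rw [dif_pos (show natToType m < natToType k from natToType.lt_iff_lt.mpr hm)]
    rw [dense_iff_inter_open]
    intro O hO hOne
    obtain ⟨f, hf⟩ := hOne
    obtain ⟨I, u, hu, husub⟩ := isOpen_pi_iff.mp hO f hf
    set V : ∀ t, Set (X t) := fun t => if t ∈ I then u t else univ with hVdef
    have hVo : ∀ t, IsOpen (V t) := by
      intro t
      rw [hVdef]
      by_cases ht : t ∈ I
      · simpa [ht] using (hu t ht).1
      · simp [ht]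
    have hVne : ∀ t, (V t).Nonempty := by
      intro t
      rw [hVdef]
      by_cases ht : t ∈ I
      · simpa [ht] using ⟨f t, (hu t ht).2⟩
      · simp [ht]
    have hpiV : Set.univ.pi V ⊆ O := by
      intro x hx
      refine husub fun t ht => ?_
      have ht' : t ∈ I := ht
      have := hx t (mem_univ t)
      rw [hVdef] at this
      simpa [ht'] using this
    set Act : Set S := {t | ∃ m, t ∈ suppF X h m} with hActdef
    have hcode : ∀ t ∈ Act, ∃ q : ℕ × ℕ, coordAt X h q = some t := by
      intro t ht
      obtain ⟨m, hm⟩ := ht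
      obtain ⟨i, hi⟩ := List.mem_iff_get.mp (Finset.mem_toList.mpr hm)
      exact ⟨(m, i.1), by
        show (suppF X h m).toList[i.1]? = some t
        rw [List.getElem?_eq_getElem i.2, ← hi, List.get_eq_getElem]⟩
    set cc : S → ℕ × ℕ := fun t => if ht : t ∈ Act then (hcode t ht).choose else (0, 0)
      with hccdef
    have hcc : ∀ t ∈ Act, coordAt X h (cc t) = some t := by
      intro t ht
      rw [hccdef]
      simp only [dif_pos ht]
      exact (hcode t ht).choose_spec
    set F' : Finset S := I.filter (fun t => t ∈ Act) with hF'def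
    have hccF : ∀ t ∈ F', coordAt X h (cc t) = some t := by
      intro t ht
      exact hcc t (Finset.mem_filter.mp ht).2
    obtain ⟨n, hn⟩ := joint_hit hσ hrun cc F' hccF V (fun t _ => hVo t) (fun t _ => hVne t)
    have hnonempty : (Set.univ.pi (fun t => dd X h n t ∩ V t)).Nonempty := by
      refine univ_pi_nonempty_iff.mpr fun t => ?_
      by_cases htI : t ∈ I
      · by_cases htA : t ∈ Act
        · exact hn t (Finset.mem_filter.mpr ⟨htI, htA⟩)
        · have hdd : dd X h n t = Set.univ := by
            by_contra hne'
            exact htA ⟨n, (Set.Finite.mem_toFinset (dbox_finite (h n))).mpr hne'⟩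
          rw [hdd, Set.univ_inter]
          exact hVne t
      · have hVt : V t = Set.univ := by rw [hVdef]; simp [htI]
        rw [hVt, Set.inter_univ]
        exact (dbox_open _ t).2
    obtain ⟨x, hx⟩ := hnonempty
    refine ⟨x, ?_, ?_⟩
    · exact hpiV fun t ht => (hx t (mem_univ t)).2
    · refine mem_iUnion.mpr ⟨natToType n, ?_⟩
      have hxdd : x ∈ Set.univ.pi (dd X h n) := fun t ht => (hx t ht).1
      exact dbox_subset (hrun n).1.1 (hrun n).1.2 hxdd
end

section
/- Let X be a topological space, κ an infinite cardinal, and P a family of open subsets of X such that: (1) P is closed under finite unions and finite intersections; (2) there is a κ-winning strategy s for X such that s maps every transfinite sequence of length < κ of members of P to a member of P; (3) P has property (seq). For x, y ∈ X set x ∼_P y iff for every V ∈ P one has x ∈ V ⇔ y ∈ V; let X/P be the set of equivalence classes, q : X → X/P the quotient map, and equip X/P with the topology generated by the images q[V] for V ∈ P. Then X/P is a completely regular space and q : X → X/P is skeletal. -/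
open Cardinal Set Topology TopologicalSpace

universe u

variable (X : Type u) (P : Set (Set X))

/-- The equivalence relation `x ∼_P y` iff for every `V ∈ P`, `x ∈ V ⇔ y ∈ V`. -/
def famSetoid : Setoid X :=
  ⟨fun x y => ∀ V ∈ P, (x ∈ V ↔ y ∈ V),
    ⟨fun _ _ _ => Iff.rfl, fun h V hV => (h V hV).symm,
      fun h₁ h₂ V hV => (h₁ V hV).trans (h₂ V hV)⟩⟩

/-- The quotient `X/P` of `X` by the relation `∼_P`. -/
def FamQuot : Type u := Quotient (famSetoid X P)

/-- The topology on `X/P` generated by the images `q[V]`, `V ∈ P`, of the quotient map. -/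
def famTop : TopologicalSpace (FamQuot X P) :=
  TopologicalSpace.generateFrom
    {W : Set (FamQuot X P) | ∃ V ∈ P, W = Quotient.mk (famSetoid X P) '' V}


/-! ### Auxiliary material for Statement 13 -/

section FamQuotAux

open Set TopologicalSpace Topology

local notation "mkq[" Q "]" => Quotient.mk (famSetoid _ Q)

theorem FamQuotAux.mkq_surj (Q : Set (Set X)) :
    Function.Surjective (mkq[Q] : X → FamQuot X Q) :=
  fun y => Quotient.exists_rep y

theorem FamQuotAux.mem_image_mkq {Q : Set (Set X)} {V : Set X} (hV : V ∈ Q) {a : X} :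
    mkq[Q] a ∈ mkq[Q] '' V ↔ a ∈ V := by
  constructor
  · rintro ⟨b, hb, hba⟩
    exact (Quotient.exact hba V hV).1 hb
  · exact fun h => ⟨a, h, rfl⟩

theorem FamQuotAux.image_inter_mkq {Q : Set (Set X)} {A B : Set X} (hA : A ∈ Q) (hB : B ∈ Q) :
    mkq[Q] '' (A ∩ B) = (mkq[Q] '' A) ∩ (mkq[Q] '' B) := by
  ext y
  obtain ⟨a, rfl⟩ := FamQuotAux.mkq_surj X Q y
  constructor
  · rintro ⟨b, ⟨hbA, hbB⟩, hba⟩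
    exact ⟨⟨b, hbA, hba⟩, ⟨b, hbB, hba⟩⟩
  · rintro ⟨h1, h2⟩
    exact ⟨a, ⟨(FamQuotAux.mem_image_mkq X hA).1 h1, (FamQuotAux.mem_image_mkq X hB).1 h2⟩, rfl⟩

theorem FamQuotAux.compl_image_mkq_subset {Q : Set (Set X)} {B A : Set X} (h : Bᶜ ⊆ A) :
    (mkq[Q] '' B)ᶜ ⊆ mkq[Q] '' A := by
  intro y hy
  obtain ⟨a, rfl⟩ := FamQuotAux.mkq_surj X Q y
  exact ⟨a, h (fun hb => hy ⟨a, hb, rfl⟩), rfl⟩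

theorem FamQuotAux.isOpen_image_mkq {Q : Set (Set X)} {V : Set X} (hV : V ∈ Q) :
    IsOpen[famTop X Q] (mkq[Q] '' V) :=
  TopologicalSpace.isOpen_generateFrom_of_mem ⟨V, hV, rfl⟩

theorem FamQuotAux.sInter_finite_subbasic {Q : Set (Set X)}
    (hint : ∀ U ∈ Q, ∀ V ∈ Q, U ∩ V ∈ Q)
    {t : Set (Set (FamQuot X Q))} (htf : t.Finite)
    (hts : t ⊆ {W : Set (FamQuot X Q) | ∃ V ∈ Q, W = mkq[Q] '' V}) (htn : t.Nonempty) :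
    ∃ V ∈ Q, ⋂₀ t = mkq[Q] '' V := by
  refine Set.Finite.induction_on
    (motive := fun t _ => t ⊆ {W : Set (FamQuot X Q) | ∃ V ∈ Q, W = mkq[Q] '' V} → t.Nonempty →
      ∃ V ∈ Q, ⋂₀ t = mkq[Q] '' V) t htf (fun _ h => absurd h (by simp)) ?_ hts htn
  intro a u hau huf IH hsub hne
  obtain ⟨Va, hVa, rfl⟩ := hsub (Set.mem_insert a u)
  rcases u.eq_empty_or_nonempty with rfl | hun
  · exact ⟨Va, hVa, (Set.sInter_insert _ _).trans ((congrArg (_ ∩ ·) Set.sInter_empty).trans (Set.inter_univ _))⟩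
  · obtain ⟨Vu, hVu, hVueq⟩ := IH (fun w hw => hsub (Set.mem_insert_of_mem _ hw)) hun
    refine ⟨Va ∩ Vu, hint _ hVa _ hVu, ?_⟩
    exact (Set.sInter_insert _ _).trans (by rw [hVueq]; exact (FamQuotAux.image_inter_mkq X hVa hVu).symm)

theorem FamQuotAux.exists_basic {Q : Set (Set X)}
    (hint : ∀ U ∈ Q, ∀ V ∈ Q, U ∩ V ∈ Q)
    {O : Set (FamQuot X Q)} (hO : IsOpen[famTop X Q] O) {z : FamQuot X Q} (hz : z ∈ O) :
    O = Set.univ ∨ ∃ V ∈ Q, z ∈ mkq[Q] '' V ∧ mkq[Q] '' V ⊆ O := by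
  letI := famTop X Q
  have hb := TopologicalSpace.isTopologicalBasis_of_subbasis
    (t := famTop X Q) (s := {W : Set (FamQuot X Q) | ∃ V ∈ Q, W = mkq[Q] '' V}) rfl
  obtain ⟨v, ⟨t, ⟨htf, hts⟩, rfl⟩, hzv, hvO⟩ := hb.exists_subset_of_mem_open hz hO
  rcases t.eq_empty_or_nonempty with rfl | htn
  · left
    exact Set.eq_univ_of_univ_subset (by simpa using hvO)
  · obtain ⟨V, hV, hVeq⟩ := FamQuotAux.sInter_finite_subbasic X hint htf hts htn
    exact Or.inr ⟨V, hV, hVeq ▸ hzv, hVeq ▸ hvO⟩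

theorem FamQuotAux.famQuot_regular {Q : Set (Set X)}
    (hint : ∀ U ∈ Q, ∀ V ∈ Q, U ∩ V ∈ Q)
    (hseqQ : ∀ W ∈ Q, ∃ V U : ℕ → Set X, (∀ n, V n ∈ Q) ∧ (∀ n, U n ∈ Q) ∧
      W = ⋃ n, U n ∧ ∀ n, U n ⊆ (V n)ᶜ ∧ (V n)ᶜ ⊆ U (n + 1)) :
    @RegularSpace (FamQuot X Q) (famTop X Q) := by
  letI := famTop X Q
  refine RegularSpace.of_exists_mem_nhds_isClosed_subset fun z sset hs => ?_
  obtain ⟨O, hOs, hO, hzO⟩ := mem_nhds_iff.1 hs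
  rcases FamQuotAux.exists_basic X hint hO hzO with huniv | ⟨W, hW, hzW, hWO⟩
  · exact ⟨Set.univ, Filter.univ_mem, isClosed_univ, huniv ▸ hOs⟩
  · obtain ⟨Vs, Us, hVsQ, hUsQ, hWeq, hch⟩ := hseqQ W hW
    have hzUn : z ∈ ⋃ n, mkq[Q] '' Us n := by
      rw [← Set.image_iUnion, ← hWeq]; exact hzW
    obtain ⟨n, hzn⟩ := Set.mem_iUnion.1 hzUn
    refine ⟨(mkq[Q] '' Vs n)ᶜ, ?_, (FamQuotAux.isOpen_image_mkq X (hVsQ n)).isClosed_compl, ?_⟩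
    · refine Filter.mem_of_superset
        ((FamQuotAux.isOpen_image_mkq X (hUsQ n)).mem_nhds hzn) ?_
      have hdisj : mkq[Q] '' (Us n ∩ Vs n) = (∅ : Set (FamQuot X Q)) := by
        have : Us n ∩ Vs n = ∅ := by
          rw [Set.eq_empty_iff_forall_notMem]
          exact fun x hx => (hch n).1 hx.1 hx.2
        rw [this, Set.image_empty]; rfl
      intro y hy hy'
      have : y ∈ mkq[Q] '' (Us n ∩ Vs n) := by
        rw [FamQuotAux.image_inter_mkq X (hUsQ n) (hVsQ n)]; exact ⟨hy, hy'⟩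
      rw [hdisj] at this
      exact this
    · have h1 : (mkq[Q] '' Vs n)ᶜ ⊆ mkq[Q] '' Us (n + 1) :=
        FamQuotAux.compl_image_mkq_subset X (hch n).2
      have h2 : mkq[Q] '' Us (n + 1) ⊆ mkq[Q] '' W :=
        Set.image_mono (hWeq ▸ Set.subset_iUnion Us (n + 1))
      exact h1.trans (h2.trans (hWO.trans hOs))

theorem FamQuotAux.famQuot_secondCountable {Q : Set (Set X)} (hcnt : Q.Countable) :
    @SecondCountableTopology (FamQuot X Q) (famTop X Q) := by
  letI := famTop X Q
  have hb := TopologicalSpace.isTopologicalBasis_of_subbasis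
    (t := famTop X Q) (s := {W : Set (FamQuot X Q) | ∃ V ∈ Q, W = mkq[Q] '' V}) rfl
  refine hb.secondCountableTopology ?_
  have hS : {W : Set (FamQuot X Q) | ∃ V ∈ Q, W = mkq[Q] '' V}.Countable := by
    have heq : {W : Set (FamQuot X Q) | ∃ V ∈ Q, W = mkq[Q] '' V}
        = (fun V => mkq[Q] '' V) '' Q := by
      ext W
      constructor
      · rintro ⟨V, hV, rfl⟩; exact ⟨V, hV, rfl⟩
      · rintro ⟨V, hV, rfl⟩; exact ⟨V, hV, rfl⟩
    rw [heq]
    exact hcnt.image _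
  exact (Set.countable_setOf_finite_subset hS).image _

theorem FamQuotAux.cr_of_pseudoMetric (Y : Type u) [PseudoMetricSpace Y] :
    CompletelyRegularSpace Y := by
  constructor
  intro x K hK hxK
  rcases K.eq_empty_or_nonempty with rfl | hKne
  · exact ⟨fun _ => 0, continuous_const, rfl, fun y hy => absurd hy (Set.notMem_empty y)⟩
  · have hc : 0 < Metric.infDist x K := (hK.notMem_iff_infDist_pos hKne).1 hxK
    refine ⟨fun y => Set.projIcc (0:ℝ) 1 zero_le_one
      (1 - Metric.infDist y K / Metric.infDist x K), ?_, ?_, ?_⟩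
    · exact continuous_projIcc.comp
        (continuous_const.sub ((Metric.continuous_infDist_pt K).div_const _))
    · show Set.projIcc (0:ℝ) 1 zero_le_one
        (1 - Metric.infDist x K / Metric.infDist x K) = 0
      have h1 : (1:ℝ) - Metric.infDist x K / Metric.infDist x K = 0 := by
        field_simp
        norm_num
      rw [h1]
      ext
      simp [Set.projIcc]
    · intro y hy
      show Set.projIcc (0:ℝ) 1 zero_le_one
        (1 - Metric.infDist y K / Metric.infDist x K) = 1
      rw [Metric.infDist_zero_of_mem hy]
      ext
      simp [Set.projIcc]

theorem FamQuotAux.famQuot_CR_of_countable {Q : Set (Set X)} (hcnt : Q.Countable)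
    (hint : ∀ U ∈ Q, ∀ V ∈ Q, U ∩ V ∈ Q)
    (hseqQ : ∀ W ∈ Q, ∃ V U : ℕ → Set X, (∀ n, V n ∈ Q) ∧ (∀ n, U n ∈ Q) ∧
      W = ⋃ n, U n ∧ ∀ n, U n ⊆ (V n)ᶜ ∧ (V n)ᶜ ⊆ U (n + 1)) :
    @CompletelyRegularSpace (FamQuot X Q) (famTop X Q) := by
  have hreg := FamQuotAux.famQuot_regular X hint hseqQ
  have hsc := FamQuotAux.famQuot_secondCountable X hcnt
  have hpm : @TopologicalSpace.PseudoMetrizableSpace (FamQuot X Q) (famTop X Q) :=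
    @TopologicalSpace.PseudoMetrizableSpace.of_regularSpace_secondCountableTopology
      _ (famTop X Q) hreg hsc
  obtain ⟨m, hm, hcg⟩ := hpm.exists_countably_generated
  rw [← hm]
  exact @FamQuotAux.cr_of_pseudoMetric (FamQuot X Q) (@UniformSpace.pseudoMetricSpace _ m hcg)

theorem FamQuotAux.exists_countable_subfamily
    (hinter : ∀ U ∈ P, ∀ V ∈ P, U ∩ V ∈ P)
    (hseq : ∀ W ∈ P, ∃ V U : ℕ → Set X, (∀ n, V n ∈ P) ∧ (∀ n, U n ∈ P) ∧
      W = ⋃ n, U n ∧ ∀ n, U n ⊆ (V n)ᶜ ∧ (V n)ᶜ ⊆ U (n + 1))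
    {W : Set X} (hW : W ∈ P) :
    ∃ Q : Set (Set X), Q.Countable ∧ W ∈ Q ∧ Q ⊆ P ∧
      (∀ U ∈ Q, ∀ V ∈ Q, U ∩ V ∈ Q) ∧
      (∀ A ∈ Q, ∃ V U : ℕ → Set X, (∀ n, V n ∈ Q) ∧ (∀ n, U n ∈ Q) ∧
        A = ⋃ n, U n ∧ ∀ n, U n ⊆ (V n)ᶜ ∧ (V n)ᶜ ⊆ U (n + 1)) := by
  classical
  choose! sV sU hV hU hEq hCh using hseq
  let step : Set (Set X) → Set (Set X) := fun T =>
    T ∪ Set.image2 (· ∩ ·) T T ∪ ⋃ A ∈ T, (Set.range (sV A) ∪ Set.range (sU A))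
  let F : ℕ → Set (Set X) := fun n => Nat.rec {W} (fun _ T => step T) n
  have hFs : ∀ n, F (n + 1) = step (F n) := fun _ => rfl
  have hstep : ∀ T, T ⊆ step T := fun T =>
    Set.subset_union_left.trans Set.subset_union_left
  have hmono : ∀ m n, m ≤ n → F m ⊆ F n := by
    intro m n h
    induction n, h using Nat.le_induction with
    | base => exact subset_rfl
    | succ n hmn ih => exact ih.trans (hstep (F n))
  have hsubP : ∀ n, F n ⊆ P := by
    intro n
    induction n with
    | zero => exact Set.singleton_subset_iff.2 hW
    | succ n ih =>
      rw [hFs]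
      rintro A ((hA | hA) | hA)
      · exact ih hA
      · obtain ⟨B, hB, C, hC, rfl⟩ := hA
        exact hinter _ (ih hB) _ (ih hC)
      · simp only [Set.mem_iUnion] at hA
        obtain ⟨B, hB, hA⟩ := hA
        rcases hA with ⟨k, rfl⟩ | ⟨k, rfl⟩
        · exact hV B (ih hB) k
        · exact hU B (ih hB) k
  have hcntF : ∀ n, (F n).Countable := by
    intro n
    induction n with
    | zero => exact Set.countable_singleton W
    | succ n ih =>
      rw [hFs]
      exact (ih.union (ih.image2 ih _)).union
        (ih.biUnion fun A _ => (Set.countable_range _).union (Set.countable_range _))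
  refine ⟨⋃ n, F n, Set.countable_iUnion hcntF, Set.mem_iUnion.2 ⟨0, rfl⟩,
    Set.iUnion_subset hsubP, ?_, ?_⟩
  · intro A hA B hB
    obtain ⟨m, hm⟩ := Set.mem_iUnion.1 hA
    obtain ⟨n, hn⟩ := Set.mem_iUnion.1 hB
    refine Set.mem_iUnion.2 ⟨max m n + 1, ?_⟩
    rw [hFs]
    exact Or.inl (Or.inr ⟨A, hmono _ _ (le_max_left m n) hm, B, hmono _ _ (le_max_right m n) hn, rfl⟩)
  · intro A hA
    obtain ⟨n, hn⟩ := Set.mem_iUnion.1 hA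
    have hAP : A ∈ P := hsubP n hn
    refine ⟨sV A, sU A, fun k => Set.mem_iUnion.2 ⟨n + 1, ?_⟩,
      fun k => Set.mem_iUnion.2 ⟨n + 1, ?_⟩, hEq A hAP, hCh A hAP⟩
    · rw [hFs]
      exact Or.inr (Set.mem_biUnion hn (Or.inl ⟨k, rfl⟩))
    · rw [hFs]
      exact Or.inr (Set.mem_biUnion hn (Or.inr ⟨k, rfl⟩))

end FamQuotAux
/-- If `P` is a family of open subsets of `X` closed under finite unions
and finite intersections as well as under some `κ`-winning strategy, and `P` has
property (seq), then `X/P` is completely regular and the quotient map `q : X → X/P` is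
skeletal. -/
theorem famQuot_completelyRegular_and_skeletal [TopologicalSpace X]
    (κ : Cardinal.{u}) (hκ : ℵ₀ ≤ κ)
    (hopen : ∀ V ∈ P, IsOpen V)
    (hunion : ∀ U ∈ P, ∀ V ∈ P, U ∪ V ∈ P)
    (hinter : ∀ U ∈ P, ∀ V ∈ P, U ∩ V ∈ P)
    (hstrat : ∃ s : GameStrategy X κ, IsWinningStrategy X κ s ∧
      ∀ (i : κ.ord.ToType) (g : {j : κ.ord.ToType // j < i} → Set X),
        (∀ j, g j ∈ P) → s i g ∈ P)
    (hseq : ∀ W ∈ P, ∃ V U : ℕ → Set X, (∀ n, V n ∈ P) ∧ (∀ n, U n ∈ P) ∧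
      W = ⋃ n, U n ∧ ∀ n, U n ⊆ (V n)ᶜ ∧ (V n)ᶜ ⊆ U (n + 1)) :
    @CompletelyRegularSpace (FamQuot X P) (famTop X P) ∧
      @Skeletal X (FamQuot X P) _ (famTop X P) (Quotient.mk (famSetoid X P)) := by
  classical
  letI tP : TopologicalSpace (FamQuot X P) := famTop X P
  letI tP' : TopologicalSpace (Quotient (famSetoid X P)) := famTop X P
  constructor
  · -- completely regular
    refine @CompletelyRegularSpace.mk _ (famTop X P) (fun z K hK hzK => ?_)
    have hO := hK.isOpen_compl
    rcases FamQuotAux.exists_basic X hinter hO hzK with huniv | ⟨U, hU, hzU, hUK⟩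
    · have hKe : K = ∅ := by rw [← compl_compl K, huniv, Set.compl_univ]
      exact ⟨fun _ => 0, continuous_const, rfl, fun y hy => absurd (hKe ▸ hy) (Set.notMem_empty y)⟩
    · obtain ⟨Q, hQc, hUQ, hQP, hQint, hQseq⟩ :=
        FamQuotAux.exists_countable_subfamily X P hinter hseq hU
      letI tQ : TopologicalSpace (FamQuot X Q) := famTop X Q
      letI tQ' : TopologicalSpace (Quotient (famSetoid X Q)) := famTop X Q
      have hCRQ := FamQuotAux.famQuot_CR_of_countable X hQc hQint hQseq
      let π : FamQuot X P → FamQuot X Q :=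
        Quotient.lift (fun a => Quotient.mk (famSetoid X Q) a)
          (fun a b hab => Quot.sound (fun V hV => hab V (hQP hV)))
      have hπc : Continuous[famTop X P, famTop X Q] π := by
        refine continuous_generateFrom_iff.mpr ?_
        rintro s ⟨V, hV, rfl⟩
        have hpre : π ⁻¹' (Quotient.mk (famSetoid X Q) '' V)
            = Quotient.mk (famSetoid X P) '' V := by
          ext y
          obtain ⟨a, rfl⟩ := FamQuotAux.mkq_surj X P y
          show Quotient.mk (famSetoid X Q) a ∈ Quotient.mk (famSetoid X Q) '' V ↔ _
          rw [FamQuotAux.mem_image_mkq X hV]; exact (FamQuotAux.mem_image_mkq X (hQP hV)).symm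
        have h := FamQuotAux.isOpen_image_mkq X (hQP hV)
        exact (congrArg (@IsOpen (FamQuot X P) (famTop X P)) hpre).mpr h
      obtain ⟨a, rfl⟩ := FamQuotAux.mkq_surj X P z
      have hz' : Quotient.mk (famSetoid X Q) a ∈ Quotient.mk (famSetoid X Q) '' U :=
        (FamQuotAux.mem_image_mkq X hUQ).2 ((FamQuotAux.mem_image_mkq X hU).1 hzU)
      obtain ⟨f₀, hf₀c, hf₀z, hf₀K⟩ :=
        @CompletelyRegularSpace.completely_regular _ (famTop X Q) hCRQ
          (Quotient.mk (famSetoid X Q) a) ((Quotient.mk (famSetoid X Q) '' U)ᶜ)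
          (FamQuotAux.isOpen_image_mkq X hUQ).isClosed_compl (fun h => h hz')
      refine ⟨f₀ ∘ π, hf₀c.comp hπc, hf₀z, ?_⟩
      intro y hy
      obtain ⟨b, rfl⟩ := FamQuotAux.mkq_surj X P y
      have hbU : Quotient.mk (famSetoid X P) b ∉ Quotient.mk (famSetoid X P) '' U :=
        fun h => (hUK h) hy
      have hbQ : Quotient.mk (famSetoid X Q) b ∈ (Quotient.mk (famSetoid X Q) '' U)ᶜ :=
        fun h => hbU ((FamQuotAux.mem_image_mkq X hU).2 ((FamQuotAux.mem_image_mkq X hUQ).1 h))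
      exact hf₀K hbQ
  · -- skeletal
    obtain ⟨s, hsW, hsP⟩ := hstrat
    refine ⟨?_, fun y => Quotient.exists_rep y, ?_⟩
    · refine continuous_generateFrom_iff.mpr ?_
      rintro W ⟨V, hV, rfl⟩
      have hpre : Quotient.mk (famSetoid X P) ⁻¹' (Quotient.mk (famSetoid X P) '' V) = V := by
        ext a
        exact FamQuotAux.mem_image_mkq X hV
      have h := hopen V hV
      rw [← hpre] at h
      exact h
    · intro U hUo hUne
      by_contra hcon
      rw [Set.not_nonempty_iff_eq_empty] at hcon
      have key : ∀ S, S ∈ P → S.Nonempty →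
          ∃ T, T ∈ P ∧ T.Nonempty ∧ T ⊆ S ∧ T ∩ U = ∅ := by
        intro S hS hSne
        have hqS := FamQuotAux.isOpen_image_mkq X hS
        have hqSne : (Quotient.mk (famSetoid X P) '' S).Nonempty := hSne.image _
        have hnsub : ¬ (Quotient.mk (famSetoid X P) '' S ⊆
            @closure (FamQuot X P) (famTop X P) (Quotient.mk (famSetoid X P) '' U)) := by
          intro h
          have h2 : Quotient.mk (famSetoid X P) '' S ⊆
              @interior (FamQuot X P) (famTop X P)
                (@closure (FamQuot X P) (famTop X P) (Quotient.mk (famSetoid X P) '' U)) :=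
            interior_maximal h hqS
          rw [hcon] at h2
          exact hqSne.ne_empty (Set.subset_empty_iff.1 h2)
        obtain ⟨z, hzS, hz⟩ := Set.not_subset.1 hnsub
        replace hz := mt (@mem_closure_iff (FamQuot X P) (famTop X P) z
          (Quotient.mk (famSetoid X P) '' U)).2 hz
        push_neg at hz
        obtain ⟨O, hOopen, hzO, hOU⟩ := hz
        rcases FamQuotAux.exists_basic X hinter hOopen hzO with huniv | ⟨V', hV', hzV', hV'O⟩
        · exfalso
          have h5 : Quotient.mk (famSetoid X P) '' U = ∅ := by
            rw [huniv] at hOU; exact (Set.univ_inter _).symm.trans hOU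
          exact (hUne.image (Quotient.mk (famSetoid X P))).ne_empty h5
        · refine ⟨V' ∩ S, hinter _ hV' _ hS, ?_, Set.inter_subset_right, ?_⟩
          · obtain ⟨a, rfl⟩ := FamQuotAux.mkq_surj X P z
            exact ⟨a, (FamQuotAux.mem_image_mkq X hV').1 hzV',
              (FamQuotAux.mem_image_mkq X hS).1 hzS⟩
          · rw [Set.eq_empty_iff_forall_notMem]
            rintro x ⟨⟨hxV', _⟩, hxU⟩
            have hmem : Quotient.mk (famSetoid X P) x ∈ O ∩ Quotient.mk (famSetoid X P) '' U :=
              ⟨hV'O ((FamQuotAux.mem_image_mkq X hV').2 hxV'), ⟨x, hxU, rfl⟩⟩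
            rw [hOU] at hmem
            exact hmem
      have key' : ∀ S : Set X, ∃ T, S ∈ P → S.Nonempty →
          T ∈ P ∧ T.Nonempty ∧ T ⊆ S ∧ T ∩ U = ∅ := by
        intro S
        by_cases h : S ∈ P ∧ S.Nonempty
        · obtain ⟨T, hT⟩ := key S h.1 h.2
          exact ⟨T, fun _ _ => hT⟩
        · exact ⟨∅, fun h1 h2 => absurd ⟨h1, h2⟩ h⟩
      choose pick hpick using key'
      have wf : WellFounded ((· < ·) : κ.ord.ToType → κ.ord.ToType → Prop) :=
        IsWellFounded.wf
      let B : κ.ord.ToType → Set X :=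
        wf.fix (fun i IH => pick (s i (fun j => IH j.1 j.2)))
      have hBdef : ∀ i, B i = pick (s i (fun j => B j.1)) := fun i => wf.fix_eq _ i
      have hInv : ∀ i, B i ∈ P ∧ (IsOpen (B i) ∧ (B i).Nonempty) ∧
          B i ⊆ s i (fun j => B j.1) ∧ B i ∩ U = ∅ := by
        refine fun i => wf.induction
          (C := fun i => B i ∈ P ∧ (IsOpen (B i) ∧ (B i).Nonempty) ∧
            B i ⊆ s i (fun j => B j.1) ∧ B i ∩ U = ∅) i ?_
        intro x IH
        have hsP' : s x (fun j => B j.1) ∈ P :=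
          hsP x _ (fun j => (IH j.1 j.2).1)
        have hsO := hsW.1 x (fun j => B j.1) (fun j => (IH j.1 j.2).2.1)
        have h := hpick (s x (fun j => B j.1)) hsP' hsO.2
        rw [hBdef x]
        exact ⟨h.1, ⟨hopen _ h.1, h.2.1⟩, h.2.2.1, h.2.2.2⟩
      have hdense := hsW.2 B (fun i => ⟨(hInv i).2.1, (hInv i).2.2.1⟩)
      obtain ⟨x, hxU, hxB⟩ := hdense.inter_open_nonempty U hUo hUne
      obtain ⟨i, hxi⟩ := Set.mem_iUnion.1 hxB
      exact (Set.eq_empty_iff_forall_notMem.1 (hInv i).2.2.2) x ⟨hxi, hxU⟩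
end
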